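/- arXiv:1601.01067 — 6 statements merged into one kernel-verified Lean document; each statement's English description precedes it below -/
import Mathlib

section
/- Let k be a field and let f₁,…,f_m ∈ k[x] be polynomials, not all zero, with d = max₁≤i≤m deg(f_i) ≥ 1. Then there exist g₁,…,g_m ∈ k[x] with deg(g_i) < d for every i such that gcd(f₁,…,f_m) = f₁g₁ + ⋯ + f_m g_m. -/
open Polynomial

/-- Let k be a field and f₁,…,f_m ∈ k[x], not all zero, with
d = max deg(f_i) ≥ 1. Then there exist g₁,…,g_m ∈ k[x] with deg(g_i) < d such that
gcd(f₁,…,f_m) = f₁g₁ + ⋯ + f_m g_m. -/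
theorem stmt0 {k : Type*} [Field k] {m : ℕ} (f : Fin m → k[X])
    (hne : ∃ i, f i ≠ 0) (d : ℕ) (hd1 : 1 ≤ d)
    (hd : ∀ i, (f i).natDegree ≤ d)
    (G : k[X]) (hGdvd : ∀ i, G ∣ f i)
    (hGgreatest : ∀ c : k[X], (∀ i, c ∣ f i) → c ∣ G) :
    ∃ g : Fin m → k[X], (∀ i, (g i).natDegree < d) ∧ G = ∑ i, f i * g i := by
  classical
  obtain ⟨j, hj⟩ := hne
  have hG0 : G ≠ 0 := by
    intro h
    exact hj (zero_dvd_iff.mp (h ▸ hGdvd j))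
  -- Step 1: Bezout representation
  obtain ⟨h, hh⟩ : ∃ h : Fin m → k[X], G = ∑ i, f i * h i := by
    set I := Ideal.span (Set.range f) with hI
    have hprin := (IsPrincipalIdealRing.principal I).1
    obtain ⟨g0, hg0⟩ := hprin
    have hfI : ∀ i, f i ∈ I := fun i => Ideal.subset_span ⟨i, rfl⟩
    have hg0dvd : ∀ i, g0 ∣ f i := by
      intro i
      have := hfI i
      rw [hg0] at this
      exact Ideal.mem_span_singleton.mp this
    have hg0G : g0 ∣ G := hGgreatest g0 hg0dvd
    have hg0I : g0 ∈ I := by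
      rw [hg0]
      exact Submodule.mem_span_singleton_self g0
    rw [hI, Ideal.mem_span_range_iff_exists_fun] at hg0I
    obtain ⟨c, hc⟩ := hg0I
    obtain ⟨u, hu⟩ := hg0G
    refine ⟨fun i => c i * u, ?_⟩
    rw [hu, ← hc, Finset.sum_mul]
    exact Finset.sum_congr rfl fun i _ => by ring
  by_cases hGd : d ≤ G.natDegree
  · -- G has maximal degree; f j is a constant multiple of G
    obtain ⟨q, hq⟩ := hGdvd j
    have hq0 : q ≠ 0 := by
      intro h0
      rw [h0, mul_zero] at hq
      exact hj hq
    have hdq : q.natDegree = 0 := by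
      have := natDegree_mul hG0 hq0
      have h2 := hd j
      rw [hq, this] at h2
      omega
    obtain ⟨a, ha, hqa⟩ : ∃ a : k, a ≠ 0 ∧ q = C a := by
      refine ⟨q.coeff 0, ?_, Polynomial.eq_C_of_natDegree_eq_zero hdq⟩
      intro h0
      exact hq0 (Polynomial.eq_C_of_natDegree_eq_zero hdq ▸ h0 ▸ (map_zero C))
    rw [hqa] at hq
    refine ⟨fun i => if i = j then C a⁻¹ else 0, ?_, ?_⟩
    · intro i
      by_cases hij : i = j <;> simp [hij] <;> omega
    · simp only [mul_ite, mul_zero]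
      rw [Finset.sum_ite_eq' Finset.univ j (fun i => f i * C a⁻¹)]
      simp only [Finset.mem_univ, if_true]
      rw [hq, mul_assoc, ← map_mul, mul_inv_cancel₀ ha, map_one, mul_one]
  · push_neg at hGd
    set p := f j / G with hpdef
    have hp : G * p = f j := EuclideanDomain.mul_div_cancel' hG0 (hGdvd j)
    have hp0 : p ≠ 0 := by
      intro h0
      rw [h0, mul_zero] at hp
      exact hj hp.symm
    have hpfj : p.natDegree ≤ (f j).natDegree := by
      have := natDegree_mul hG0 hp0
      rw [hp] at this
      omega
    set q : Fin m → k[X] := fun i => f i / G with hqdef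
    have hqq : ∀ i, G * q i = f i := fun i => EuclideanDomain.mul_div_cancel' hG0 (hGdvd i)
    set S := ∑ i ∈ Finset.univ.erase j, q i * (h i / p) with hS
    set g : Fin m → k[X] := fun i => if i = j then h j + S else h i % p with hg
    -- degree of mod terms
    have hmodlt : ∀ i, (h i % p).degree < p.degree := fun i => EuclideanDomain.mod_lt _ hp0
    have hmodd : ∀ i, (h i % p).natDegree < d := by
      intro i
      by_cases h0 : h i % p = 0
      · rw [h0]; simpa using Nat.lt_of_succ_le hd1
      · have := Polynomial.natDegree_lt_natDegree h0 (hmodlt i)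
        have := hpfj
        have := hd j
        omega
    -- key identity
    have key : ∀ i, f j * (q i * (h i / p)) + f i * (h i % p) = f i * h i := by
      intro i
      conv_rhs => rw [← EuclideanDomain.div_add_mod (h i) p]
      rw [← hp, ← hqq i]
      ring
    -- sum identity
    have hsum : G = f j * g j + ∑ i ∈ Finset.univ.erase j, f i * (h i % p) := by
      have h1 : (g j : k[X]) = h j + S := by simp [hg]
      rw [h1, hh, mul_add, hS, Finset.mul_sum, add_assoc, ← Finset.sum_add_distrib]
      rw [← Finset.add_sum_erase Finset.univ (fun i => f i * h i) (Finset.mem_univ j)]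
      congr 1
      exact (Finset.sum_congr rfl fun i _ => key i).symm
    -- bound sum degree
    set B := (f j).natDegree + d - 1 with hB
    have hterm : ∀ i ∈ Finset.univ.erase j, (f i * (h i % p)).natDegree ≤ B := by
      intro i _
      by_cases h0 : h i % p = 0
      · simp [h0, hB]
      · have h1 : (f i * (h i % p)).natDegree ≤ (f i).natDegree + (h i % p).natDegree :=
          natDegree_mul_le
        have h2 := Polynomial.natDegree_lt_natDegree h0 (hmodlt i)
        have h3 := hd i
        omega
    have hSd : (∑ i ∈ Finset.univ.erase j, f i * (h i % p)).natDegree ≤ B :=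
      Polynomial.natDegree_sum_le_of_forall_le _ _ hterm
    have hGB : G.natDegree ≤ B := by
      have := hd j
      have hGfj : G.natDegree ≤ (f j).natDegree := by
        have := natDegree_mul hG0 hp0
        rw [hp] at this
        omega
      omega
    have hgj : (g j).natDegree < d := by
      by_cases h0 : g j = 0
      · rw [h0]; simpa using Nat.lt_of_succ_le hd1
      · have hfg : (f j * g j).natDegree = (f j).natDegree + (g j).natDegree :=
          natDegree_mul hj h0
        have heq : f j * g j = G - ∑ i ∈ Finset.univ.erase j, f i * (h i % p) := by
          rw [hsum]; ring
        have hle : (f j * g j).natDegree ≤ B := by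
          rw [heq]
          exact le_trans (natDegree_sub_le _ _) (max_le hGB hSd)
        omega
    refine ⟨g, ?_, ?_⟩
    · intro i
      by_cases hij : i = j
      · rw [hij]; exact hgj
      · have : g i = h i % p := by simp [hg, hij]
        rw [this]; exact hmodd i
    · rw [hsum, ← Finset.add_sum_erase Finset.univ (fun i => f i * g i) (Finset.mem_univ j)]
      congr 1
      refine Finset.sum_congr rfl fun i hi => ?_
      have hij := Finset.ne_of_mem_erase hi
      simp [hg, hij]
end

section
/- Let f₁,…,f_m ∈ ℤ[x], d = max_i deg(f_i) ≥ 1, and h = max_i height(f_i). If 1 belongs to the ideal generated by f₁,…,f_m in ℚ[x], then there exist a nonzero integer δ > 0 with height(δ) ≤ d(2h + log(d+1)) and polynomials g₁,…,g_m ∈ ℤ[x] with deg(g_i) < d for all i, such that δ = f₁g₁ + ⋯ + f_m g_m. -/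
open Polynomial Matrix

/-- The height of an integer polynomial: the natural logarithm of the maximum of the
absolute values of its coefficients (the height of 0 is 0, since `Real.log 0 = 0`). -/
noncomputable def polyHeight (f : Polynomial ℤ) : ℝ :=
  Real.log (((Finset.range (f.natDegree + 1)).sup fun k => (f.coeff k).natAbs : ℕ) : ℝ)

lemma natAbs_coeff_le_sup (f : Polynomial ℤ) (k : ℕ) :
    (f.coeff k).natAbs ≤ ((Finset.range (f.natDegree + 1)).sup fun j => (f.coeff j).natAbs) := by
  rcases le_or_gt k f.natDegree with hk | hk
  · exact Finset.le_sup (f := fun j => (f.coeff j).natAbs) (Finset.mem_range.2 (Nat.lt_succ_of_le hk))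
  · simp [Polynomial.coeff_eq_zero_of_natDegree_lt hk]

lemma one_le_sup_natAbs {f : Polynomial ℤ} (hf : f ≠ 0) :
    1 ≤ ((Finset.range (f.natDegree + 1)).sup fun j => (f.coeff j).natAbs) := by
  have h0 : f.coeff f.natDegree ≠ 0 := Polynomial.leadingCoeff_ne_zero.2 hf
  exact le_trans (Int.natAbs_pos.2 h0) (natAbs_coeff_le_sup f f.natDegree)

lemma polyHeight_nonneg {f : Polynomial ℤ} (hf : f ≠ 0) : 0 ≤ polyHeight f := by
  unfold polyHeight
  apply Real.log_nonneg
  exact_mod_cast one_le_sup_natAbs hf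

lemma abs_coeff_le_exp_polyHeight (f : Polynomial ℤ) (k : ℕ) :
    (|f.coeff k| : ℝ) ≤ Real.exp (polyHeight f) := by
  by_cases hf : f = 0
  · simp [hf]; positivity
  · have h1 := one_le_sup_natAbs hf
    have hpos : (0 : ℝ) < (((Finset.range (f.natDegree + 1)).sup fun j => (f.coeff j).natAbs : ℕ) : ℝ) := by
      exact_mod_cast h1
    rw [polyHeight, Real.exp_log hpos]
    have h2 : |f.coeff k| ≤ (((Finset.range (f.natDegree + 1)).sup fun j => (f.coeff j).natAbs : ℕ) : ℤ) := by
      rw [Int.abs_eq_natAbs]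
      exact_mod_cast natAbs_coeff_le_sup f k
    exact_mod_cast h2

/-- Hadamard's inequality, via `Orientation.abs_volumeForm_apply_le`. -/
lemma hadamard_ineq {r : ℕ} (M : Matrix (Fin r) (Fin r) ℝ) :
    |M.det| ≤ ∏ j, Real.sqrt (∑ i, (M i j) ^ 2) := by
  haveI : Fact (Module.finrank ℝ (EuclideanSpace ℝ (Fin r)) = r) := ⟨finrank_euclideanSpace_fin⟩
  set b := EuclideanSpace.basisFun (Fin r) ℝ with hb
  set v : Fin r → EuclideanSpace ℝ (Fin r) :=
    fun j => (WithLp.equiv 2 _).symm (fun i => M i j) with hv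
  let o : Orientation ℝ (EuclideanSpace ℝ (Fin r)) (Fin r) := b.toBasis.orientation
  have h1 := o.abs_volumeForm_apply_le v
  rw [o.volumeForm_robust' b v] at h1
  have hM : b.toBasis.toMatrix v = M := by
    ext i j
    simp [Module.Basis.toMatrix_apply, hb, hv, EuclideanSpace.basisFun_repr]
  rw [Module.Basis.det_apply, hM] at h1
  refine h1.trans (le_of_eq (Finset.prod_congr rfl fun j _ => ?_))
  rw [EuclideanSpace.norm_eq]
  congr 1
  exact Finset.sum_congr rfl fun i _ => by simp [hv, sq_abs]


lemma bezout_deg_lt {m d : ℕ} (hd1 : 1 ≤ d) (F : Fin m → ℚ[X])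
    (hdeg : ∀ i, (F i).degree ≤ (d : ℕ)) (c : Fin m → ℚ[X])
    (hc : ∑ i, F i * c i = 1) :
    ∃ g : Fin m → ℚ[X], (∀ i, (g i).degree < (d : ℕ)) ∧ ∑ i, F i * g i = 1 := by
  have hex : ∃ j, F j ≠ 0 := by
    by_contra hall
    push_neg at hall
    rw [Finset.sum_congr rfl (fun i _ => by rw [hall i, zero_mul])] at hc
    simp at hc
  obtain ⟨j, hFj⟩ := hex
  set q : ℚ[X] := F j * C (F j).leadingCoeff⁻¹ with hqdef
  have hq : q.Monic := monic_mul_leadingCoeff_inv hFj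
  have hdq : q.degree = (F j).degree := degree_mul_leadingCoeff_inv _ hFj
  set S : ℚ[X] := ∑ i ∈ Finset.univ.erase j, F i * (c i /ₘ q) with hSdef
  set g : Fin m → ℚ[X] :=
    fun i => if i = j then c j + C (F j).leadingCoeff⁻¹ * S else c i %ₘ q with hgdef
  have hgj : g j = c j + C (F j).leadingCoeff⁻¹ * S := by simp [hgdef]
  have hgi : ∀ i, i ≠ j → g i = c i %ₘ q := fun i hi => by simp [hgdef, hi]
  have hsum : ∑ i, F i * g i = 1 := by
    rw [← Finset.add_sum_erase _ (fun i => F i * g i) (Finset.mem_univ j),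
      ← hc, ← Finset.add_sum_erase _ (fun i => F i * c i) (Finset.mem_univ j)]
    have h1 : ∀ i ∈ Finset.univ.erase j,
        F i * g i = F i * c i - q * (F i * (c i /ₘ q)) := by
      intro i hi
      rw [hgi i (Finset.mem_erase.1 hi).1, modByMonic_eq_sub_mul_div _ q]
      ring
    rw [Finset.sum_congr rfl h1, Finset.sum_sub_distrib, ← Finset.mul_sum, ← hSdef, hgj, hqdef]
    ring
  refine ⟨g, fun i => ?_, hsum⟩
  rcases eq_or_ne i j with hij | hij
  · -- the pivot index
    rw [hij]
    by_cases hgj0 : g j = 0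
    · rw [hgj0, degree_zero]
      exact WithBot.bot_lt_coe d
    have hkey : F j * g j = 1 - ∑ i ∈ Finset.univ.erase j, F i * (c i %ₘ q) := by
      have hth := hsum
      rw [← Finset.add_sum_erase _ (fun i => F i * g i) (Finset.mem_univ j)] at hth
      have h2 : ∀ i ∈ Finset.univ.erase j, F i * g i = F i * (c i %ₘ q) := fun i hi => by
        rw [hgi i (Finset.mem_erase.1 hi).1]
      rw [Finset.sum_congr rfl h2] at hth
      rw [eq_sub_iff_add_eq]
      exact hth
    set D : ℕ := (F j).natDegree with hDdef
    have hDeq : (F j).degree = (D : ℕ) := degree_eq_natDegree hFj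
    have hterm : ∀ i ∈ Finset.univ.erase j,
        (F i * (c i %ₘ q)).degree < ((d + D : ℕ) : WithBot ℕ) := by
      intro i _
      rcases eq_or_ne (c i %ₘ q) 0 with h0 | h0
      · rw [h0, mul_zero, degree_zero]; exact WithBot.bot_lt_coe _
      rcases eq_or_ne (F i) 0 with h1 | h1
      · rw [h1, zero_mul, degree_zero]; exact WithBot.bot_lt_coe _
      refine lt_of_le_of_lt (degree_mul_le _ _) ?_
      have hmod : (c i %ₘ q).degree < (F j).degree := hdq ▸ degree_modByMonic_lt _ hq
      have hFi' : (F i).natDegree ≤ d := natDegree_le_iff_degree_le.2 (hdeg i)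
      have hmod' : (c i %ₘ q).natDegree < D := by
        rw [natDegree_lt_iff_degree_lt h0, ← hDeq]; exact hmod
      rw [degree_eq_natDegree h1, degree_eq_natDegree h0, ← Nat.cast_add]
      exact_mod_cast (by omega : (F i).natDegree + (c i %ₘ q).natDegree < d + D)
    have hrhs : (1 - ∑ i ∈ Finset.univ.erase j, F i * (c i %ₘ q)).degree
        < ((d + D : ℕ) : WithBot ℕ) := by
      refine lt_of_le_of_lt (degree_sub_le _ _) (max_lt ?_ ?_)
      · rw [degree_one]
        exact_mod_cast (by omega : 0 < d + D)
      · refine lt_of_le_of_lt (degree_sum_le _ _) ?_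
        rw [Finset.sup_lt_iff (WithBot.bot_lt_coe _)]
        exact hterm
    rw [← hkey, degree_mul, hDeq, degree_eq_natDegree hgj0, ← Nat.cast_add] at hrhs
    have hfin : D + (g j).natDegree < d + D := by exact_mod_cast hrhs
    rw [degree_eq_natDegree hgj0]
    exact_mod_cast (by omega : (g j).natDegree < d)
  · rw [hgi i hij]
    exact lt_of_lt_of_le (degree_modByMonic_lt _ hq) (hdq ▸ hdeg j)

lemma core {n r : ℕ} (u : Fin r → Fin n → ℤ) (e : Fin n → ℤ)
    (hind : LinearIndependent ℚ (fun i => fun k => ((u i k : ℚ))))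
    (hmem : (fun k => ((e k : ℚ))) ∈
      Submodule.span ℚ (Set.range (fun i => fun k => ((u i k : ℚ))))) :
    ∃ δ : ℤ, δ ≠ 0 ∧ r ≤ n ∧
      (|δ| : ℝ) ≤ ∏ i, Real.sqrt (∑ k, ((u i k : ℝ)) ^ 2) ∧
      ∃ z : Fin r → ℤ, ∀ k, δ * e k = ∑ i, z i * u i k := by
  classical
  set uQ : Fin r → Fin n → ℚ := fun i k => (u i k : ℚ) with huQ
  set rows : Fin n → Fin r → ℚ := fun k i => uQ i k with hrows
  -- the rows span everything
  have hspan_top : Submodule.span ℚ (Set.range rows) = ⊤ := by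
    set M : Matrix (Fin n) (Fin r) ℚ := Matrix.of fun k i => uQ i k with hM
    have h1 : M.rank = Module.finrank ℚ (Submodule.span ℚ (Set.range uQ)) :=
      rank_eq_finrank_span_cols M
    have h2 : Module.finrank ℚ (Submodule.span ℚ (Set.range uQ)) = r := by
      rw [finrank_span_eq_card hind, Fintype.card_fin]
    have h3 : Mᵀ.rank = Module.finrank ℚ (Submodule.span ℚ (Set.range rows)) := by
      have := rank_eq_finrank_span_cols Mᵀ
      exact this
    have h4 : Module.finrank ℚ (Submodule.span ℚ (Set.range rows)) = r := by
      rw [← h3, rank_transpose, h1, h2]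
    apply Submodule.eq_top_of_finrank_eq
    rw [h4, Module.finrank_fintype_fun_eq_card, Fintype.card_fin]
  obtain ⟨t, htsub, htspan, htind⟩ := exists_linearIndependent ℚ (Set.range rows)
  haveI : Fintype t := (Set.Finite.subset (Set.finite_range rows) htsub).fintype
  let B : Module.Basis t ℚ (Fin r → ℚ) := Module.Basis.mk htind
    (by rw [Subtype.range_coe, htspan, hspan_top])
  have hcard : Fintype.card t = r := by
    have := Module.finrank_eq_card_basis B
    rw [Module.finrank_fintype_fun_eq_card, Fintype.card_fin] at this
    exact this.symm
  let σ : Fin r ≃ t := (Fintype.equivFinOfCardEq hcard).symm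
  have hρex : ∀ a : Fin r, ((σ a : Fin r → ℚ)) ∈ Set.range rows := fun a => htsub (σ a).2
  let ρ : Fin r → Fin n := fun a => (hρex a).choose
  have hρ : ∀ a, rows (ρ a) = ((σ a : Fin r → ℚ)) := fun a => (hρex a).choose_spec
  have hρinj : Function.Injective ρ := by
    intro a b hab
    have hv : ((σ a : Fin r → ℚ)) = ((σ b : Fin r → ℚ)) := by rw [← hρ a, ← hρ b, hab]
    exact σ.injective (Subtype.ext hv)
  have hrn : r ≤ n := by
    simpa using Fintype.card_le_of_injective ρ hρinj
  set Qz : Matrix (Fin r) (Fin r) ℤ := Matrix.of fun a i => u i (ρ a) with hQz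
  set Q : Matrix (Fin r) (Fin r) ℚ := Qz.map (Int.castRingHom ℚ) with hQ
  have hQrow : ∀ a, Q a = ((σ a : Fin r → ℚ)) := by
    intro a
    funext i
    exact congrFun (hρ a) i
  have hQind : LinearIndependent ℚ (fun a => Q a) := by
    have hcomp := htind.comp σ σ.injective
    have : (fun a => Q a) = (Subtype.val ∘ σ) := funext hQrow
    rw [this]
    exact hcomp
  have hQdet : IsUnit Q.det :=
    (Matrix.isUnit_iff_isUnit_det Q).mp (Matrix.linearIndependent_rows_iff_isUnit.mp hQind)
  rw [Submodule.mem_span_range_iff_exists_fun] at hmem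
  obtain ⟨y, hy⟩ := hmem
  set eρ : Fin r → ℚ := fun a => (e (ρ a) : ℚ) with heρ
  have hQy : Q *ᵥ y = eρ := by
    funext a
    have hk := congrFun hy (ρ a)
    rw [Finset.sum_apply] at hk
    simp only [Pi.smul_apply, smul_eq_mul] at hk
    simpa [Matrix.mulVec, dotProduct, mul_comm, hQ, hQz, huQ, heρ] using hk
  haveI : Invertible Q := Q.invertibleOfIsUnitDet hQdet
  have hyc : Q.det • y = Matrix.cramer Q eρ := by
    apply Matrix.mulVec_injective_of_invertible Q
    rw [Matrix.mulVec_smul, hQy, Matrix.mulVec_cramer]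
  set δ : ℤ := Qz.det with hδ
  have hδQ : ((δ : ℤ) : ℚ) = Q.det := RingHom.map_det (Int.castRingHom ℚ) Qz
  set ez : Fin r → ℤ := fun a => e (ρ a) with hez
  set z : Fin r → ℤ := Matrix.cramer Qz ez with hz
  have hzc : ∀ i, ((z i : ℤ) : ℚ) = Matrix.cramer Q eρ i := by
    intro i
    rw [hz, Matrix.cramer_apply, Matrix.cramer_apply]
    rw [show Matrix.updateCol Q i eρ = ((Matrix.updateCol Qz i ez).map (Int.castRingHom ℚ)) from ?_]
    · exact RingHom.map_det (Int.castRingHom ℚ) _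
    · rw [Matrix.map_updateCol]
      rfl
  have hδ0 : δ ≠ 0 := by
    intro h0
    apply hQdet.ne_zero
    rw [← hδQ, h0, Int.cast_zero]
  refine ⟨δ, hδ0, hrn, ?_, z, ?_⟩
  · -- Hadamard bound
    set R : Matrix (Fin r) (Fin r) ℝ := Qz.map (Int.castRingHom ℝ) with hR
    have hRdet : ((δ : ℤ) : ℝ) = R.det := RingHom.map_det (Int.castRingHom ℝ) Qz
    have hH := hadamard_ineq R
    rw [← hRdet] at hH
    have habs : (|δ| : ℝ) = |((δ : ℤ) : ℝ)| := by push_cast; rfl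
    rw [habs]
    refine hH.trans (Finset.prod_le_prod (fun i _ => Real.sqrt_nonneg _) fun i _ => ?_)
    apply Real.sqrt_le_sqrt
    have himg : ∑ a, ((u i (ρ a) : ℝ)) ^ 2
        = ∑ k ∈ Finset.univ.image ρ, ((u i k : ℝ)) ^ 2 := by
      rw [Finset.sum_image (fun a _ b _ hab => hρinj hab)]
    have hle : ∑ k ∈ Finset.univ.image ρ, ((u i k : ℝ)) ^ 2
        ≤ ∑ k, ((u i k : ℝ)) ^ 2 :=
      Finset.sum_le_sum_of_subset_of_nonneg (Finset.subset_univ _)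
        (fun k _ _ => sq_nonneg _)
    calc ∑ a, (R a i) ^ 2 = ∑ a, ((u i (ρ a) : ℝ)) ^ 2 := by
          refine Finset.sum_congr rfl fun a _ => ?_
          rfl
      _ ≤ ∑ k, ((u i k : ℝ)) ^ 2 := himg ▸ hle
  · -- the integral identity
    intro k
    have hk := congrFun hy k
    rw [Finset.sum_apply] at hk
    simp only [Pi.smul_apply, smul_eq_mul] at hk
    have hδy : ∀ i, (δ : ℚ) * y i = ((z i : ℤ) : ℚ) := by
      intro i
      rw [hzc i, ← hyc, Pi.smul_apply, smul_eq_mul, hδQ]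
    have hcast : ((δ : ℤ) : ℚ) * ((e k : ℤ) : ℚ) = ∑ i, ((z i : ℤ) : ℚ) * ((u i k : ℤ) : ℚ) := by
      rw [← hk, Finset.mul_sum]
      refine Finset.sum_congr rfl fun i _ => ?_
      rw [← hδy i]
      ring
    exact_mod_cast hcast

/-- Let f₁,…,f_m ∈ ℤ[x], d = max deg(f_i) ≥ 1, h = max height(f_i).
If 1 belongs to the ideal generated by the f_i in ℚ[x], then there exist an integer δ > 0
with height(δ) ≤ d(2h + log(d+1)) and g₁,…,g_m ∈ ℤ[x] with deg(g_i) < d such that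
δ = f₁g₁ + ⋯ + f_m g_m . -/
theorem stmt1 {m : ℕ} (f : Fin m → Polynomial ℤ)
    (d : ℕ) (hd1 : 1 ≤ d) (hd : ∀ i, (f i).natDegree ≤ d)
    (h : ℝ) (hh : ∀ i, polyHeight (f i) ≤ h)
    (h1 : (1 : Polynomial ℚ) ∈
      Ideal.span (Set.range fun i => (f i).map (Int.castRingHom ℚ))) :
    ∃ δ : ℤ, 0 < δ ∧ Real.log (δ : ℝ) ≤ (d : ℝ) * (2 * h + Real.log ((d : ℝ) + 1)) ∧
      ∃ g : Fin m → Polynomial ℤ, (∀ i, (g i).natDegree < d) ∧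
        (Polynomial.C δ = ∑ i, f i * g i) := by
  classical
  set n := 2 * d with hn
  set F : Fin m → ℚ[X] := fun i => (f i).map (Int.castRingHom ℚ) with hF
  -- a rational combination
  have h1' : ∃ c : Fin m → ℚ[X], ∑ i, F i * c i = 1 := by
    rw [Ideal.span, Submodule.mem_span_range_iff_exists_fun] at h1
    obtain ⟨c, hc⟩ := h1
    refine ⟨c, ?_⟩
    rw [← hc]
    exact Finset.sum_congr rfl fun i _ => by rw [smul_eq_mul, mul_comm]
  obtain ⟨c, hc⟩ := h1'
  have hdegF : ∀ i, (F i).degree ≤ (d : ℕ) := by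
    intro i
    refine le_trans (Polynomial.degree_map_le) ?_
    exact le_trans degree_le_natDegree (by exact_mod_cast Nat.cast_le.2 (hd i))
  obtain ⟨c', hc'deg, hc'⟩ := bezout_deg_lt hd1 F hdegF c hc
  -- some fᵢ is nonzero, hence h ≥ 0
  have hfne : ∃ j, f j ≠ 0 := by
    by_contra hall
    push_neg at hall
    have : ∀ i, F i = 0 := fun i => by rw [hF]; simp [hall i]
    rw [Finset.sum_congr rfl (fun i _ => by rw [this i, zero_mul])] at hc'
    simp at hc'
  have hh0 : 0 ≤ h := le_trans (polyHeight_nonneg hfne.choose_spec) (hh _)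
  -- the integer columns
  set wz : Fin m × Fin d → Fin n → ℤ :=
    fun p k => (f p.1 * Polynomial.X ^ ((p.2 : ℕ))).coeff (k : ℕ) with hwz
  set wQ : Fin m × Fin d → Fin n → ℚ := fun p k => ((wz p k : ℚ)) with hwQ
  have hwQ' : ∀ p k, wQ p k = (F p.1 * Polynomial.X ^ ((p.2 : ℕ))).coeff (k : ℕ) := by
    intro p k
    rw [hwQ]
    simp only [hwz, hF]
    rw [show (f p.1).map (Int.castRingHom ℚ) * Polynomial.X ^ ((p.2 : ℕ))
        = ((f p.1) * Polynomial.X ^ ((p.2 : ℕ))).map (Int.castRingHom ℚ) by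
      rw [Polynomial.map_mul, Polynomial.map_pow, Polynomial.map_X]]
    rw [Polynomial.coeff_map]
    rfl
  set eZ : Fin n → ℤ := fun k => (1 : Polynomial ℤ).coeff (k : ℕ) with heZ
  -- 1 is a combination of the columns
  have hpoly : (1 : ℚ[X]) = ∑ p : Fin m × Fin d,
      Polynomial.C ((c' p.1).coeff (p.2 : ℕ)) * (F p.1 * Polynomial.X ^ ((p.2 : ℕ))) := by
    rw [← hc', Fintype.sum_prod_type]
    refine Finset.sum_congr rfl fun i _ => ?_
    have hci : c' i = ∑ j ∈ Finset.range d, Polynomial.C ((c' i).coeff j) * Polynomial.X ^ j := by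
      have hlt : (c' i).natDegree < d := by
        rcases eq_or_ne (c' i) 0 with h0 | h0
        · rw [h0, natDegree_zero]; omega
        · exact (natDegree_lt_iff_degree_lt h0).2 (hc'deg i)
      conv_lhs => rw [Polynomial.as_sum_range' (c' i) d hlt]
      exact Finset.sum_congr rfl fun j _ => (Polynomial.C_mul_X_pow_eq_monomial).symm
    calc F i * c' i
        = ∑ j ∈ Finset.range d, Polynomial.C ((c' i).coeff j) * (F i * Polynomial.X ^ j) := by
          conv_lhs => rw [hci]
          rw [Finset.mul_sum]
          exact Finset.sum_congr rfl fun j _ => by ring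
      _ = ∑ j : Fin d, Polynomial.C ((c' i).coeff (j : ℕ)) * (F i * Polynomial.X ^ (j : ℕ)) :=
          (Fin.sum_univ_eq_sum_range _ d).symm
  have hmem : (fun k => ((eZ k : ℚ))) ∈ Submodule.span ℚ (Set.range wQ) := by
    have hfun : (fun k : Fin n => ((eZ k : ℚ)))
        = ∑ p : Fin m × Fin d, ((c' p.1).coeff (p.2 : ℕ)) • wQ p := by
      funext k
      rw [Finset.sum_apply]
      have hco := congrArg (fun P : ℚ[X] => P.coeff (k : ℕ)) hpoly
      simp only [Polynomial.finset_sum_coeff, Polynomial.coeff_C_mul] at hco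
      have hL : ((eZ k : ℚ)) = (1 : ℚ[X]).coeff (k : ℕ) := by
        rw [heZ]; simp [Polynomial.coeff_one]
      rw [hL, hco]
      exact Finset.sum_congr rfl fun p _ => by rw [Pi.smul_apply, smul_eq_mul, hwQ' p k]
    rw [hfun]
    exact Submodule.sum_mem _ fun p _ =>
      Submodule.smul_mem _ _ (Submodule.subset_span (Set.mem_range_self p))
  -- select a linearly independent subfamily
  obtain ⟨t, htsub, htspan, htind⟩ := exists_linearIndependent ℚ (Set.range wQ)
  haveI : Fintype t := (Set.Finite.subset (Set.finite_range wQ) htsub).fintype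
  set r := Fintype.card t with hr
  set σ : Fin r ≃ t := (Fintype.equivFin t).symm with hσ
  have hpre : ∀ a : Fin r, ((σ a : Fin n → ℚ)) ∈ Set.range wQ := fun a => htsub (σ a).2
  set pre : Fin r → Fin m × Fin d := fun a => (hpre a).choose with hpredef
  have hpre' : ∀ a, wQ (pre a) = ((σ a : Fin n → ℚ)) := fun a => (hpre a).choose_spec
  set u : Fin r → Fin n → ℤ := fun a => wz (pre a) with hu
  have huQ : (fun a => fun k => ((u a k : ℚ))) = fun a => ((σ a : Fin n → ℚ)) := by
    funext a
    exact hpre' a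
  have hindu : LinearIndependent ℚ (fun a => fun k => ((u a k : ℚ))) := by
    rw [huQ]
    exact htind.comp σ σ.injective
  have hranget : Set.range (fun a => ((σ a : Fin n → ℚ))) = t := by
    rw [show (fun a : Fin r => ((σ a : Fin n → ℚ))) = Subtype.val ∘ σ from rfl,
      Set.range_comp, Equiv.range_eq_univ, Set.image_univ, Subtype.range_coe]
  have hmemu : (fun k => ((eZ k : ℚ))) ∈
      Submodule.span ℚ (Set.range (fun a => fun k => ((u a k : ℚ)))) := by
    rw [huQ, hranget, htspan]
    exact hmem
  obtain ⟨δ0, hδ00, hrn, hbound, z, hzid⟩ := core u eZ hindu hmemu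
  -- make δ positive
  obtain ⟨δ, hδpos, hδabs, z', hz'⟩ :
      ∃ δ : ℤ, 0 < δ ∧ |δ| = |δ0| ∧ ∃ z' : Fin r → ℤ, ∀ k, δ * eZ k = ∑ a, z' a * u a k := by
    rcases hδ00.lt_or_gt with hneg | hpos
    · refine ⟨-δ0, by omega, abs_neg δ0, fun a => -z a, fun k => ?_⟩
      rw [neg_mul, hzid k, ← Finset.sum_neg_distrib]
      exact Finset.sum_congr rfl fun a _ => (neg_mul _ _).symm
    · exact ⟨δ0, hpos, rfl, z, hzid⟩
  -- the integer polynomials g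
  set g : Fin m → Polynomial ℤ := fun i => ∑ a : Fin r,
    if (pre a).1 = i then Polynomial.C (z' a) * Polynomial.X ^ (((pre a).2 : ℕ)) else 0 with hg
  have hgdeg : ∀ i, (g i).natDegree < d := by
    intro i
    rcases eq_or_ne (g i) 0 with h0 | h0
    · rw [h0, natDegree_zero]; omega
    rw [natDegree_lt_iff_degree_lt h0]
    refine lt_of_le_of_lt (degree_sum_le _ _) ?_
    rw [Finset.sup_lt_iff (WithBot.bot_lt_coe _)]
    intro a _
    split_ifs with hcase
    · refine lt_of_le_of_lt (degree_C_mul_X_pow_le _ _) ?_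
      exact_mod_cast (pre a).2.2
    · rw [degree_zero]; exact WithBot.bot_lt_coe _
  have hgsum : Polynomial.C δ = ∑ i, f i * g i := by
    have hswap : ∑ i, f i * g i = ∑ a : Fin r,
        Polynomial.C (z' a) * (f (pre a).1 * Polynomial.X ^ (((pre a).2 : ℕ))) := by
      calc ∑ i, f i * g i
          = ∑ i, ∑ a : Fin r, if (pre a).1 = i then
              f i * (Polynomial.C (z' a) * Polynomial.X ^ (((pre a).2 : ℕ))) else 0 := by
            refine Finset.sum_congr rfl fun i _ => ?_
            rw [hg, Finset.mul_sum]
            exact Finset.sum_congr rfl fun a _ => by rw [mul_ite, mul_zero]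
        _ = ∑ a : Fin r, ∑ i, if (pre a).1 = i then
              f i * (Polynomial.C (z' a) * Polynomial.X ^ (((pre a).2 : ℕ))) else 0 :=
            Finset.sum_comm
        _ = ∑ a : Fin r,
              Polynomial.C (z' a) * (f (pre a).1 * Polynomial.X ^ (((pre a).2 : ℕ))) := by
            refine Finset.sum_congr rfl fun a _ => ?_
            rw [Finset.sum_ite_eq]
            simp only [Finset.mem_univ, if_true]
            ring
    rw [hswap]
    apply Polynomial.ext
    intro k
    rw [Polynomial.finset_sum_coeff]
    simp only [Polynomial.coeff_C_mul]
    rcases lt_or_ge k n with hk | hk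
    · have hid := hz' ⟨k, hk⟩
      have hL : (Polynomial.C δ).coeff k = δ * eZ ⟨k, hk⟩ := by
        rw [heZ]
        rw [Polynomial.coeff_C]
        rcases eq_or_ne k 0 with rfl | hk0
        · simp
        · simp [Polynomial.coeff_one, hk0]
      rw [hL, hid]
    · have hC : (Polynomial.C δ).coeff k = 0 := by
        rw [Polynomial.coeff_C, if_neg]; omega
      rw [hC]
      symm
      apply Finset.sum_eq_zero
      intro a _
      have hdeglt : (f (pre a).1 * Polynomial.X ^ (((pre a).2 : ℕ))).natDegree < k := by
        refine lt_of_le_of_lt natDegree_mul_le ?_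
        rw [natDegree_X_pow]
        have h1 := hd (pre a).1
        have h2 := (pre a).2.2
        omega
      rw [Polynomial.coeff_eq_zero_of_natDegree_lt hdeglt, mul_zero]
  -- the height bound
  have hcol : ∀ p : Fin m × Fin d,
      ∑ k : Fin n, ((wz p k : ℝ)) ^ 2 ≤ ((d : ℝ) + 1) * Real.exp h ^ 2 := by
    intro p
    set P : Polynomial ℤ := f p.1 * Polynomial.X ^ ((p.2 : ℕ)) with hP
    have habs : ∀ k : ℕ, (|P.coeff k| : ℝ) ≤ Real.exp h := by
      intro k
      rw [hP, Polynomial.coeff_mul_X_pow']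
      split_ifs with hle
      · exact le_trans (abs_coeff_le_exp_polyHeight (f p.1) _)
          (Real.exp_le_exp.2 (hh p.1))
      · simp; positivity
    set s : Finset (Fin n) := Finset.univ.filter (fun k : Fin n => P.coeff (k : ℕ) ≠ 0) with hs
    have hsum_eq : ∑ k : Fin n, ((wz p k : ℝ)) ^ 2 = ∑ k ∈ s, ((wz p k : ℝ)) ^ 2 := by
      rw [hs]
      symm
      apply Finset.sum_filter_of_ne
      intro k _ hne
      intro h0
      apply hne
      have hPk : wz p k = P.coeff (k : ℕ) := rfl
      rw [hPk, h0]
      norm_num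
    have hcard : s.card ≤ d + 1 := by
      have hmapsto : ∀ k ∈ s, (k : ℕ) - (p.2 : ℕ) ∈ Finset.range (d + 1) := by
        intro k hk
        rw [hs, Finset.mem_filter] at hk
        have hne := hk.2
        rw [hP, Polynomial.coeff_mul_X_pow'] at hne
        by_cases hle : (p.2 : ℕ) ≤ (k : ℕ)
        · rw [if_pos hle] at hne
          have := Polynomial.le_natDegree_of_ne_zero hne
          have := hd p.1
          rw [Finset.mem_range]
          omega
        · rw [if_neg hle] at hne
          exact absurd rfl hne
      have hinj : Set.InjOn (fun k : Fin n => (k : ℕ) - (p.2 : ℕ)) s := by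
        intro k1 hk1 k2 hk2 heq
        have h1 : (p.2 : ℕ) ≤ (k1 : ℕ) := by
          by_contra hle
          have hne := (Finset.mem_filter.1 hk1).2
          rw [hP, Polynomial.coeff_mul_X_pow', if_neg hle] at hne
          exact absurd rfl hne
        have h2 : (p.2 : ℕ) ≤ (k2 : ℕ) := by
          by_contra hle
          have hne := (Finset.mem_filter.1 hk2).2
          rw [hP, Polynomial.coeff_mul_X_pow', if_neg hle] at hne
          exact absurd rfl hne
        have heq' : (k1 : ℕ) - (p.2 : ℕ) = (k2 : ℕ) - (p.2 : ℕ) := heq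
        have : (k1 : ℕ) = (k2 : ℕ) := by omega
        exact Fin.ext this
      calc s.card ≤ (Finset.range (d + 1)).card := Finset.card_le_card_of_injOn _ hmapsto hinj
        _ = d + 1 := Finset.card_range _
    have hterm : ∀ k ∈ s, ((wz p k : ℝ)) ^ 2 ≤ Real.exp h ^ 2 := by
      intro k _
      have hPk : wz p k = P.coeff (k : ℕ) := rfl
      have h1 : |((wz p k : ℤ) : ℝ)| ≤ Real.exp h := by
        rw [hPk]
        exact habs (k : ℕ)
      calc ((wz p k : ℝ)) ^ 2 = |((wz p k : ℤ) : ℝ)| ^ 2 := (sq_abs _).symm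
        _ ≤ Real.exp h ^ 2 := by
            exact pow_le_pow_left₀ (abs_nonneg _) h1 2
    calc ∑ k : Fin n, ((wz p k : ℝ)) ^ 2 = ∑ k ∈ s, ((wz p k : ℝ)) ^ 2 := hsum_eq
      _ ≤ s.card • (Real.exp h ^ 2) := Finset.sum_le_card_nsmul _ _ _ hterm
      _ = (s.card : ℝ) * Real.exp h ^ 2 := by rw [nsmul_eq_mul]
      _ ≤ ((d : ℝ) + 1) * Real.exp h ^ 2 := by
          apply mul_le_mul_of_nonneg_right _ (by positivity)
          exact_mod_cast hcard
  set β : ℝ := Real.sqrt (((d : ℝ) + 1) * Real.exp h ^ 2) with hβ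
  have hBnd : (|δ0| : ℝ) ≤ β ^ r := by
    refine hbound.trans ?_
    have := Finset.prod_le_prod (s := (Finset.univ : Finset (Fin r)))
      (f := fun a => Real.sqrt (∑ k : Fin n, ((u a k : ℝ)) ^ 2)) (g := fun _ => β)
      (fun a _ => Real.sqrt_nonneg _)
      (fun a _ => Real.sqrt_le_sqrt (hcol (pre a)))
    rw [Finset.prod_const, Finset.card_univ, Fintype.card_fin] at this
    exact this
  have hβ1 : 1 ≤ β := by
    rw [hβ]
    rw [Real.one_le_sqrt]
    have he1 : 1 ≤ Real.exp h := by
      have := Real.add_one_le_exp h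
      linarith
    have hd0 : (1 : ℝ) ≤ (d : ℝ) + 1 := by
      have : (0:ℝ) ≤ (d:ℝ) := Nat.cast_nonneg d
      linarith
    nlinarith
  have hβr : β ^ r ≤ β ^ n := pow_le_pow_right₀ hβ1 hrn
  have hδle : ((δ : ℤ) : ℝ) ≤ β ^ n := by
    calc ((δ : ℤ) : ℝ) ≤ |((δ : ℤ) : ℝ)| := le_abs_self _
      _ = |((δ0 : ℤ) : ℝ)| := by rw [← Int.cast_abs, hδabs, Int.cast_abs]
      _ ≤ β ^ r := hBnd
      _ ≤ β ^ n := hβr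
  have hlog : Real.log ((δ : ℤ) : ℝ) ≤ (d : ℝ) * (2 * h + Real.log ((d : ℝ) + 1)) := by
    have hδposR : (0 : ℝ) < ((δ : ℤ) : ℝ) := by exact_mod_cast hδpos
    have hlog1 : Real.log ((δ : ℤ) : ℝ) ≤ Real.log (β ^ n) := Real.log_le_log hδposR hδle
    have hXpos : (0 : ℝ) < ((d : ℝ) + 1) * Real.exp h ^ 2 := by positivity
    have h2 : Real.log (β ^ n) = (n : ℝ) * (Real.log (((d : ℝ) + 1) * Real.exp h ^ 2) / 2) := by
      rw [Real.log_pow, hβ, Real.log_sqrt hXpos.le]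
    have h3 : Real.log (((d : ℝ) + 1) * Real.exp h ^ 2)
        = Real.log ((d : ℝ) + 1) + 2 * h := by
      rw [Real.log_mul (by positivity) (by positivity), Real.log_pow, Real.log_exp]
      push_cast
      ring
    rw [h2, h3, hn] at hlog1
    push_cast at hlog1
    linarith
  exact ⟨δ, hδpos, hlog, g, hgdeg, hgsum⟩
end

section
/- Let P₁ and P₂ be two monic polynomials in ℂ[x] with deg(P₁) + deg(P₂) = d. Then |P₁|·|P₂| ≤ (d+1)^{1/2}·2^d·|P₁P₂|, where |P| denotes the maximum of the absolute values (complex moduli) of the coefficients of P. -/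
open Polynomial

/-- For a polynomial over ℂ, the maximum of the moduli of its coefficients. -/
noncomputable def cnorm (P : Polynomial ℂ) : ℝ :=
  (Finset.range (P.natDegree + 1)).sup'
    (Finset.nonempty_range_iff.mpr (Nat.succ_ne_zero _))
    fun j => ‖P.coeff j‖

namespace GelfondAux

open Complex Finset

/-- Sum of squared moduli of the coefficients. -/
noncomputable def n2 (P : Polynomial ℂ) : ℝ :=
  ∑ k ∈ P.support, Complex.normSq (P.coeff k)

lemma n2_eq_sum_range (P : Polynomial ℂ) {N : ℕ} (h : P.natDegree < N) :
    n2 P = ∑ k ∈ Finset.range N, Complex.normSq (P.coeff k) := by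
  refine Finset.sum_subset ?_ ?_
  · intro k hk
    exact Finset.mem_range.mpr (lt_of_le_of_lt (le_natDegree_of_mem_supp k hk) h)
  · intro k _ hk
    rw [notMem_support_iff.mp hk]
    simp

lemma sum_shift (R : Polynomial ℂ) (N : ℕ) (c : ℝ) :
    ∑ k ∈ Finset.range (N + 1), c * Complex.normSq ((X * R).coeff k)
      = ∑ k ∈ Finset.range N, c * Complex.normSq (R.coeff k) := by
  rw [Finset.sum_range_succ']
  simp [coeff_X_mul, mul_coeff_zero]

/-- The key "root flipping" identity for the ℓ² norm of coefficients. -/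
lemma swap (z : ℂ) (R : Polynomial ℂ) :
    n2 ((X - C z) * R) = n2 ((C (starRingEnd ℂ z) * X - 1) * R) := by
  set N := R.natDegree + 1 with hN
  have hXz : (X - C z).natDegree ≤ 1 := natDegree_X_sub_C_le z
  have hCz : (C (starRingEnd ℂ z) * X - 1).natDegree ≤ 1 := by
    refine le_trans (natDegree_sub_le _ _) ?_
    simp only [sup_le_iff]
    exact ⟨le_trans (natDegree_C_mul_le _ _) natDegree_X_le, by simp⟩
  have hd1 : ((X - C z) * R).natDegree < N + 1 := by
    calc ((X - C z) * R).natDegree ≤ (X - C z).natDegree + R.natDegree :=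
          natDegree_mul_le
      _ ≤ 1 + R.natDegree := by omega
      _ < N + 1 := by omega
  have hd2 : ((C (starRingEnd ℂ z) * X - 1) * R).natDegree < N + 1 := by
    calc ((C (starRingEnd ℂ z) * X - 1) * R).natDegree
        ≤ (C (starRingEnd ℂ z) * X - 1).natDegree + R.natDegree := natDegree_mul_le
      _ ≤ 1 + R.natDegree := by omega
      _ < N + 1 := by omega
  rw [n2_eq_sum_range _ hd1, n2_eq_sum_range _ hd2]
  have key1 : ∀ k, ((X - C z) * R).coeff k = (X * R).coeff k - z * R.coeff k := by
    intro k
    rw [sub_mul, coeff_sub, coeff_C_mul]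
  have key2 : ∀ k, ((C (starRingEnd ℂ z) * X - 1) * R).coeff k
      = starRingEnd ℂ z * (X * R).coeff k - R.coeff k := by
    intro k
    rw [sub_mul, one_mul, coeff_sub, mul_assoc, coeff_C_mul]
  have e1 : ∀ k, normSq ((X * R).coeff k - z * R.coeff k)
      = normSq ((X * R).coeff k) + normSq z * normSq (R.coeff k)
        - 2 * (starRingEnd ℂ z * ((X * R).coeff k * starRingEnd ℂ (R.coeff k))).re := by
    intro k
    rw [normSq_sub, map_mul, map_mul]
    congr 3
    ring
  have e2 : ∀ k, normSq (starRingEnd ℂ z * (X * R).coeff k - R.coeff k)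
      = normSq z * normSq ((X * R).coeff k) + normSq (R.coeff k)
        - 2 * (starRingEnd ℂ z * ((X * R).coeff k * starRingEnd ℂ (R.coeff k))).re := by
    intro k
    rw [normSq_sub, map_mul, normSq_conj]
    congr 3
    ring
  have hshift : ∀ c : ℝ, ∑ k ∈ Finset.range (N + 1), c * normSq ((X * R).coeff k)
      = ∑ k ∈ Finset.range (N + 1), c * normSq (R.coeff k) := by
    intro c
    rw [sum_shift]
    symm
    rw [Finset.sum_range_succ]
    have : R.coeff N = 0 := coeff_eq_zero_of_natDegree_lt (by omega)
    simp [this]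
  have hf := hshift 1
  have hg := hshift (normSq z)
  simp only [one_mul] at hf
  simp only [key1, key2, e1, e2]
  rw [Finset.sum_sub_distrib, Finset.sum_sub_distrib, Finset.sum_add_distrib,
    Finset.sum_add_distrib, ← Finset.mul_sum, ← Finset.mul_sum, hf]
  rw [← Finset.mul_sum, hf]
  ring

noncomputable def flip (r : ℂ) : Polynomial ℂ :=
  if 1 < ‖r‖ then C (starRingEnd ℂ r) * X - 1 else X - C r

lemma n2_flip_mul (r : ℂ) (R : Polynomial ℂ) :
    n2 ((X - C r) * R) = n2 (flip r * R) := by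
  unfold flip
  split_ifs
  · exact swap r R
  · rfl

lemma flipProd (s : Multiset ℂ) : ∀ (R : Polynomial ℂ),
    n2 ((s.map fun r => X - C r).prod * R) = n2 ((s.map flip).prod * R) := by
  induction s using Multiset.induction with
  | empty => intro R; simp
  | cons a s ih =>
    intro R
    simp only [Multiset.map_cons, Multiset.prod_cons]
    rw [mul_assoc ((X - C a)), mul_left_comm (X - C a), ih ((X - C a) * R),
      mul_left_comm ((Multiset.map flip s).prod), n2_flip_mul,
      ← mul_assoc (flip a)]

lemma flip_eq_linear (r : ℂ) (h : 1 < ‖r‖) :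
    flip r = C (starRingEnd ℂ r) * X + C (-1) := by
  unfold flip
  rw [if_pos h, map_neg, C_1, sub_eq_add_neg]

lemma conj_ne_zero (r : ℂ) (h : 1 < ‖r‖) : starRingEnd ℂ r ≠ 0 := by
  intro h0
  have hr : r = 0 := by simpa using congrArg (starRingEnd ℂ) h0
  rw [hr, norm_zero] at h
  exact absurd h (by norm_num)

lemma flip_natDegree (r : ℂ) : (flip r).natDegree = 1 := by
  rcases lt_or_ge 1 (‖r‖) with h | h
  · rw [flip_eq_linear r h]
    exact natDegree_linear (conj_ne_zero r h)
  · rw [flip, if_neg (not_lt.mpr h)]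
    exact natDegree_X_sub_C r

lemma abs_flip_leadingCoeff (r : ℂ) :
    ‖((flip r).leadingCoeff)‖ = max 1 (‖r‖) := by
  rcases lt_or_ge 1 (‖r‖) with h | h
  · rw [flip_eq_linear r h, leadingCoeff_linear (conj_ne_zero r h), Complex.norm_conj]
    exact (max_eq_right h.le).symm
  · rw [flip, if_neg (not_lt.mpr h), (monic_X_sub_C r).leadingCoeff, norm_one,
      max_eq_left h]

lemma flip_ne_zero (r : ℂ) : flip r ≠ 0 := by
  intro h0
  have := flip_natDegree r
  rw [h0] at this
  simp at this

lemma abs_msum (s : Multiset ℂ) : ‖s.sum‖ ≤ (s.map (‖·‖)).sum := by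
  induction s using Multiset.induction with
  | empty => simp
  | cons a s ih =>
    simp only [Multiset.sum_cons, Multiset.map_cons]
    exact le_trans (norm_add_le _ _) (add_le_add_right ih _)

lemma abs_mprod (s : Multiset ℂ) : ‖s.prod‖ = (s.map (‖·‖)).prod := by
  induction s using Multiset.induction with
  | empty => simp
  | cons a s ih =>
    simp only [Multiset.prod_cons, Multiset.map_cons, norm_mul, ih]

lemma one_le_maxprod (s : Multiset ℂ) :
    1 ≤ (s.map fun r => max 1 (‖r‖)).prod := by
  refine Multiset.one_le_prod ?_
  intro a ha
  obtain ⟨r, _, rfl⟩ := Multiset.mem_map.mp ha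
  exact le_max_left _ _

lemma maxprod_mono {t s : Multiset ℂ} (h : t ≤ s) :
    (t.map fun r => max 1 (‖r‖)).prod
      ≤ (s.map fun r => max 1 (‖r‖)).prod := by
  obtain ⟨u, rfl⟩ := Multiset.le_iff_exists_add.mp h
  rw [Multiset.map_add, Multiset.prod_add]
  nth_rewrite 1 [← mul_one ((t.map fun r => max 1 (‖r‖)).prod)]
  exact mul_le_mul_of_nonneg_left (one_le_maxprod u)
    (le_trans zero_le_one (one_le_maxprod t))

lemma absprod_le_maxprod (t : Multiset ℂ) :
    (t.map (‖·‖)).prod ≤ (t.map fun r => max 1 (‖r‖)).prod := by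
  induction t using Multiset.induction with
  | empty => simp
  | cons a t ih =>
    simp only [Multiset.map_cons, Multiset.prod_cons]
    refine mul_le_mul (le_max_right _ _) ih ?_ ?_
    · exact Multiset.prod_nonneg (by
        intro x hx
        obtain ⟨r, _, rfl⟩ := Multiset.mem_map.mp hx
        exact norm_nonneg r)
    · exact le_trans zero_le_one (le_max_left _ _)

lemma choose_le_two_pow (n j : ℕ) : n.choose j ≤ 2 ^ n := by
  rcases le_or_gt j n with h | h
  · calc n.choose j ≤ ∑ m ∈ Finset.range (n + 1), n.choose m :=
          Finset.single_le_sum (f := fun m => n.choose m) (fun _ _ => Nat.zero_le _)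
            (Finset.mem_range.mpr (by omega))
      _ = 2 ^ n := Nat.sum_range_choose n
  · rw [Nat.choose_eq_zero_of_lt h]
    exact Nat.zero_le _

lemma esymm_abs_le (s : Multiset ℂ) (j : ℕ) :
    ‖(s.esymm j)‖
      ≤ ((Multiset.card s).choose j : ℝ) * (s.map fun r => max 1 (‖r‖)).prod := by
  rw [Multiset.esymm]
  refine le_trans (abs_msum _) ?_
  rw [Multiset.map_map]
  have hb : ∀ x ∈ (s.powersetCard j).map ((‖·‖) ∘ Multiset.prod),
      x ≤ (s.map fun r => max 1 (‖r‖)).prod := by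
    intro x hx
    obtain ⟨t, ht, rfl⟩ := Multiset.mem_map.mp hx
    have hts : t ≤ s := (Multiset.mem_powersetCard.mp ht).1
    calc ((‖·‖) ∘ Multiset.prod) t = (t.map (‖·‖)).prod := abs_mprod t
      _ ≤ (t.map fun r => max 1 (‖r‖)).prod := absprod_le_maxprod t
      _ ≤ (s.map fun r => max 1 (‖r‖)).prod := maxprod_mono hts
  refine le_trans (Multiset.sum_le_card_nsmul _ _ hb) ?_
  rw [Multiset.card_map, Multiset.card_powersetCard, nsmul_eq_mul]

lemma coeff_abs_le (s : Multiset ℂ) (k : ℕ) :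
    ‖((s.map fun r => X - C r).prod.coeff k)‖
      ≤ 2 ^ Multiset.card s * (s.map fun r => max 1 (‖r‖)).prod := by
  have hM0 : (0:ℝ) ≤ (s.map fun r => max 1 (‖r‖)).prod :=
    le_trans zero_le_one (one_le_maxprod s)
  by_cases hk : k ≤ Multiset.card s
  · have habs : ‖((-1 : ℂ) ^ (Multiset.card s - k))‖ = 1 := by
      rw [norm_pow]
      simp
    rw [Multiset.prod_X_sub_C_coeff s hk, norm_mul, habs, one_mul]
    refine le_trans (esymm_abs_le s _) ?_
    refine mul_le_mul_of_nonneg_right ?_ hM0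
    calc ((Multiset.card s).choose (Multiset.card s - k) : ℝ)
        ≤ ((2 ^ Multiset.card s : ℕ) : ℝ) := by exact_mod_cast choose_le_two_pow _ _
      _ = 2 ^ Multiset.card s := by push_cast; ring
  · have hdeg : ((s.map fun r => X - C r).prod).natDegree < k := by
      rw [natDegree_multiset_prod_X_sub_C_eq_card]
      omega
    rw [coeff_eq_zero_of_natDegree_lt hdeg, norm_zero]
    positivity

lemma landau (s : Multiset ℂ) :
    ((s.map fun r => max 1 (‖r‖)).prod) ^ 2
      ≤ n2 ((s.map fun r => X - C r).prod) := by
  have h := flipProd s 1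
  rw [mul_one, mul_one] at h
  rw [h]
  set Q := (s.map flip).prod with hQ
  have hne : Q ≠ 0 := by
    refine Multiset.prod_ne_zero ?_
    intro h0
    obtain ⟨r, _, hr⟩ := Multiset.mem_map.mp h0
    exact flip_ne_zero r hr
  have hlc : ‖Q.leadingCoeff‖ = (s.map fun r => max 1 (‖r‖)).prod := by
    rw [hQ, leadingCoeff_multiset_prod, Multiset.map_map, abs_mprod, Multiset.map_map]
    congr 1
    refine Multiset.map_congr rfl ?_
    intro r _
    exact abs_flip_leadingCoeff r
  have hmem : Q.natDegree ∈ Q.support :=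
    mem_support_iff.mpr (leadingCoeff_ne_zero.mpr hne)
  calc ((s.map fun r => max 1 (‖r‖)).prod) ^ 2
      = ‖Q.leadingCoeff‖ ^ 2 := by rw [hlc]
    _ = normSq Q.leadingCoeff := Complex.sq_norm _
    _ ≤ n2 Q := Finset.single_le_sum (f := fun k => normSq (Q.coeff k))
          (fun _ _ => normSq_nonneg _) hmem

end GelfondAux

/-- Gel'fond: Let P₁, P₂ be monic polynomials in ℂ[x] with
deg(P₁) + deg(P₂) = d. Then |P₁|·|P₂| ≤ (d+1)^{1/2}·2^d·|P₁P₂|. -/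
theorem stmt2 (P₁ P₂ : Polynomial ℂ) (h₁ : P₁.Monic) (h₂ : P₂.Monic)
    (d : ℕ) (hd : P₁.natDegree + P₂.natDegree = d) :
    cnorm P₁ * cnorm P₂ ≤ Real.sqrt ((d : ℝ) + 1) * 2 ^ d * cnorm (P₁ * P₂) := by
  classical
  open GelfondAux in
  have hm : (P₁ * P₂).Monic := h₁.mul h₂
  have hd12 : (P₁ * P₂).natDegree = d := by rw [h₁.natDegree_mul h₂, hd]
  have hsplit : ∀ (P : Polynomial ℂ), P.Monic → P = (P.roots.map fun r => X - C r).prod :=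
    fun P hP => (IsAlgClosed.splits P).eq_prod_roots_of_monic hP
  have hcard : ∀ (P : Polynomial ℂ), P.Monic → Multiset.card P.roots = P.natDegree := by
    intro P hP
    conv_rhs => rw [hsplit P hP]
    rw [natDegree_multiset_prod_X_sub_C_eq_card]
  set M : Polynomial ℂ → ℝ := fun P => (P.roots.map fun r => max 1 (‖r‖)).prod
    with hMdef
  have hM1 : ∀ P : Polynomial ℂ, 1 ≤ M P := fun P => one_le_maxprod P.roots
  have hcn_nonneg : ∀ Q : Polynomial ℂ, 0 ≤ cnorm Q := by
    intro Q
    refine le_trans (norm_nonneg (Q.coeff 0)) ?_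
    exact Finset.le_sup' (fun j => ‖(Q.coeff j)‖) (Finset.mem_range.mpr (Nat.succ_pos _))
  have hcoeff_le_cnorm : ∀ (Q : Polynomial ℂ) (k : ℕ), ‖(Q.coeff k)‖ ≤ cnorm Q := by
    intro Q k
    rcases le_or_gt k Q.natDegree with h | h
    · exact Finset.le_sup' (fun j => ‖(Q.coeff j)‖) (Finset.mem_range.mpr (by omega))
    · rw [coeff_eq_zero_of_natDegree_lt h, norm_zero]
      exact hcn_nonneg Q
  have hcnorm_le : ∀ (P : Polynomial ℂ), P.Monic → cnorm P ≤ 2 ^ P.natDegree * M P := by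
    intro P hP
    refine Finset.sup'_le _ _ ?_
    intro j _
    have h := coeff_abs_le P.roots j
    rw [← hsplit P hP, hcard P hP] at h
    exact h
  have hMmul : M (P₁ * P₂) = M P₁ * M P₂ := by
    simp only [hMdef]
    rw [roots_mul (mul_ne_zero h₁.ne_zero h₂.ne_zero), Multiset.map_add, Multiset.prod_add]
  have hlan : (M (P₁ * P₂)) ^ 2 ≤ n2 (P₁ * P₂) := by
    have h := landau (P₁ * P₂).roots
    rwa [← hsplit _ hm] at h
  have hn2le : n2 (P₁ * P₂) ≤ ((d : ℝ) + 1) * cnorm (P₁ * P₂) ^ 2 := by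
    rw [n2_eq_sum_range (P₁ * P₂) (N := d + 1) (by omega)]
    have hb : ∀ k ∈ Finset.range (d + 1),
        Complex.normSq ((P₁ * P₂).coeff k) ≤ cnorm (P₁ * P₂) ^ 2 := by
      intro k _
      rw [← Complex.sq_norm]
      exact pow_le_pow_left₀ (norm_nonneg _) (hcoeff_le_cnorm _ k) 2
    calc ∑ k ∈ Finset.range (d + 1), Complex.normSq ((P₁ * P₂).coeff k)
        ≤ ∑ _k ∈ Finset.range (d + 1), cnorm (P₁ * P₂) ^ 2 := Finset.sum_le_sum hb
      _ = ((d : ℝ) + 1) * cnorm (P₁ * P₂) ^ 2 := by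
          rw [Finset.sum_const, Finset.card_range, nsmul_eq_mul]
          push_cast
          ring
  have hMle : M (P₁ * P₂) ≤ Real.sqrt ((d : ℝ) + 1) * cnorm (P₁ * P₂) := by
    have h0 : 0 ≤ M (P₁ * P₂) := le_trans zero_le_one (hM1 _)
    have h := Real.sqrt_le_sqrt (le_trans hlan hn2le)
    rwa [Real.sqrt_sq h0, Real.sqrt_mul (by positivity), Real.sqrt_sq (hcn_nonneg _)] at h
  calc cnorm P₁ * cnorm P₂
      ≤ (2 ^ P₁.natDegree * M P₁) * (2 ^ P₂.natDegree * M P₂) := by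
        refine mul_le_mul (hcnorm_le P₁ h₁) (hcnorm_le P₂ h₂) (hcn_nonneg _) ?_
        exact mul_nonneg (by positivity) (le_trans zero_le_one (hM1 P₁))
    _ = 2 ^ d * (M P₁ * M P₂) := by rw [← hd, pow_add]; ring
    _ = 2 ^ d * M (P₁ * P₂) := by rw [hMmul]
    _ ≤ 2 ^ d * (Real.sqrt ((d : ℝ) + 1) * cnorm (P₁ * P₂)) :=
        mul_le_mul_of_nonneg_left hMle (by positivity)
    _ = Real.sqrt ((d : ℝ) + 1) * 2 ^ d * cnorm (P₁ * P₂) := by ring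
end

section
/- Let f₁,…,f_m ∈ ℤ[x] be polynomials, not all zero, with d = max_i deg(f_i) and h = max_i height(f_i), and let g = gcd(f₁,…,f_m) in ℤ[x]. Then height(g) ≤ (1/2)·log(d+1) + d·log 2 + h; equivalently |g| ≤ (d+1)^{1/2}·2^d·max_i|f_i|. -/
open Polynomial

/-- Compatibility: the complex absolute value as an `AbsoluteValue` (the norm). -/
noncomputable def Complex.abs : AbsoluteValue ℂ ℝ :=
  IsAbsoluteValue.toAbsoluteValue (norm : ℂ → ℝ)

lemma Complex.abs_apply (z : ℂ) : Complex.abs z = ‖z‖ := rfl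

lemma Complex.abs_conj (z : ℂ) : Complex.abs ((starRingEnd ℂ) z) = Complex.abs z :=
  Complex.norm_conj z

lemma Complex.abs_intCast (n : ℤ) : Complex.abs (n : ℂ) = |(n : ℝ)| :=
  Complex.norm_intCast n

lemma Complex.sq_abs (z : ℂ) : Complex.abs z ^ 2 = Complex.normSq z :=
  Complex.sq_norm z

namespace Mignotte

open Multiset

/-- Mahler measure of a complex polynomial. -/
noncomputable def mahler (p : Polynomial ℂ) : ℝ :=
  Complex.abs p.leadingCoeff * (p.roots.map fun r => max 1 (Complex.abs r)).prod

/-- Square of the L2 norm of the coefficient vector. -/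
noncomputable def l2sq (p : Polynomial ℂ) : ℝ :=
  ∑ k ∈ p.support, Complex.abs (p.coeff k) ^ 2

lemma l2sq_eq (p : Polynomial ℂ) {n : ℕ} (hn : p.natDegree < n) :
    l2sq p = ∑ k ∈ Finset.range n, Complex.abs (p.coeff k) ^ 2 := by
  apply Finset.sum_subset
  · intro k hk
    exact Finset.mem_range.2 (lt_of_le_of_lt (le_natDegree_of_mem_supp k hk) hn)
  · intro k _ hk
    rw [notMem_support_iff.1 hk]
    simp

lemma l2sq_nonneg (p : Polynomial ℂ) : 0 ≤ l2sq p :=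
  Finset.sum_nonneg fun _ _ => sq_nonneg _

lemma key (u a b : ℂ) :
    Complex.normSq (a - u * b) + Complex.normSq u * Complex.normSq a + Complex.normSq b
      = Complex.normSq ((starRingEnd ℂ) u * a - b) + Complex.normSq a
        + Complex.normSq u * Complex.normSq b := by
  simp only [Complex.normSq_apply, Complex.sub_re, Complex.sub_im, Complex.mul_re,
    Complex.mul_im, Complex.conj_re, Complex.conj_im]
  ring

lemma l2sq_swap (r : ℂ) (p : Polynomial ℂ) :
    l2sq ((X - C r) * p) = l2sq ((C ((starRingEnd ℂ) r) * X - 1) * p) := by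
  set n := p.natDegree
  have hd1 : ((X - C r) * p).natDegree < n + 1 + 1 := by
    have hmul := natDegree_mul_le (p := X - C r) (q := p)
    rw [natDegree_X_sub_C] at hmul
    omega
  have hd2 : ((C ((starRingEnd ℂ) r) * X - 1) * p).natDegree < n + 1 + 1 := by
    have hmul := natDegree_mul_le (p := C ((starRingEnd ℂ) r) * X - 1) (q := p)
    have h1 : (C ((starRingEnd ℂ) r) * X - 1).natDegree ≤ 1 := by
      refine (natDegree_sub_le _ _).trans ?_
      simp only [natDegree_one, sup_le_iff]
      exact ⟨(natDegree_C_mul_le _ _).trans natDegree_X.le, Nat.zero_le 1⟩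
    omega
  rw [l2sq_eq _ hd1, l2sq_eq _ hd2]
  have c1 : ∀ k, ((X - C r) * p).coeff (k + 1) = p.coeff k - r * p.coeff (k + 1) := by
    intro k
    rw [sub_mul, coeff_sub, coeff_X_mul, coeff_C_mul]
  have c1' : ((X - C r) * p).coeff 0 = -(r * p.coeff 0) := by
    rw [mul_coeff_zero]
    simp
  have c2 : ∀ k, ((C ((starRingEnd ℂ) r) * X - 1) * p).coeff (k + 1)
      = (starRingEnd ℂ) r * p.coeff k - p.coeff (k + 1) := by
    intro k
    rw [sub_mul, coeff_sub, one_mul, mul_assoc, coeff_C_mul, coeff_X_mul]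
  have c2' : ((C ((starRingEnd ℂ) r) * X - 1) * p).coeff 0 = -p.coeff 0 := by
    rw [mul_coeff_zero]
    simp
  conv_lhs => rw [Finset.sum_range_succ']
  conv_rhs => rw [Finset.sum_range_succ']
  simp only [c1, c1', c2, c2']
  simp only [Complex.sq_abs]
  have htel : ∑ k ∈ Finset.range (n + 1),
      (Complex.normSq (p.coeff k - r * p.coeff (k + 1))
        - Complex.normSq ((starRingEnd ℂ) r * p.coeff k - p.coeff (k + 1)))
      = (fun k => (1 - Complex.normSq r) * Complex.normSq (p.coeff k)) 0
        - (fun k => (1 - Complex.normSq r) * Complex.normSq (p.coeff k)) (n + 1) := by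
    rw [← Finset.sum_range_sub' (fun k => (1 - Complex.normSq r) * Complex.normSq (p.coeff k))]
    apply Finset.sum_congr rfl
    intro k _
    linear_combination key r (p.coeff k) (p.coeff (k + 1))
  have hz : p.coeff (n + 1) = 0 := coeff_eq_zero_of_natDegree_lt (by omega)
  rw [Finset.sum_sub_distrib] at htel
  simp only [hz, Complex.normSq_zero, Complex.normSq_neg, Complex.normSq_mul,
    mul_zero] at htel ⊢
  linarith [htel]

/-- The "flipped" linear factor. -/
noncomputable def flip (r : ℂ) : Polynomial ℂ :=
  if 1 ≤ Complex.abs r then C ((starRingEnd ℂ) r) * X - 1 else X - C r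

lemma l2sq_flip_mul (r : ℂ) (p : Polynomial ℂ) :
    l2sq (flip r * p) = l2sq ((X - C r) * p) := by
  unfold flip
  split
  · exact (l2sq_swap r p).symm
  · rfl

lemma abs_leadingCoeff_flip (r : ℂ) :
    Complex.abs (flip r).leadingCoeff = max 1 (Complex.abs r) := by
  unfold flip
  split
  case isTrue h =>
    have hr : (starRingEnd ℂ) r ≠ 0 := by
      intro h0
      have hz : Complex.abs r = 0 := by
        rw [← Complex.abs_conj, h0, Complex.abs.map_zero]
      rw [hz] at h
      linarith
    have heq : (C ((starRingEnd ℂ) r) * X - 1 : Polynomial ℂ)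
        = C ((starRingEnd ℂ) r) * X + C (-1) := by
      rw [map_neg, map_one, sub_eq_add_neg]
    rw [heq, leadingCoeff_linear hr, Complex.abs_conj]
    exact (max_eq_right h).symm
  case isFalse h =>
    rw [leadingCoeff_X_sub_C, map_one]
    exact (max_eq_left (le_of_not_ge h)).symm

lemma flip_ne_zero (r : ℂ) : flip r ≠ 0 := by
  intro h0
  have := abs_leadingCoeff_flip r
  rw [h0] at this
  rw [leadingCoeff_zero, Complex.abs.map_zero] at this
  have h1 : (1 : ℝ) ≤ 0 := le_max_left 1 (Complex.abs r) |>.trans this.symm.le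
  linarith

lemma l2sq_prod (s : Multiset ℂ) :
    ∀ p : Polynomial ℂ,
      l2sq (p * (s.map flip).prod) = l2sq (p * (s.map fun r => X - C r).prod) := by
  induction s using Multiset.induction with
  | empty => simp
  | cons r s ih =>
    intro p
    rw [Multiset.map_cons, Multiset.map_cons, Multiset.prod_cons, Multiset.prod_cons]
    calc l2sq (p * (flip r * (s.map flip).prod))
        = l2sq ((p * flip r) * (s.map flip).prod) := by rw [mul_assoc]
      _ = l2sq ((p * flip r) * (s.map fun r => X - C r).prod) := ih (p * flip r)
      _ = l2sq (flip r * (p * (s.map fun r => X - C r).prod)) := by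
            congr 1; ring
      _ = l2sq ((X - C r) * (p * (s.map fun r => X - C r).prod)) := l2sq_flip_mul r _
      _ = l2sq (p * ((X - C r) * (s.map fun r => X - C r).prod)) := by
            congr 1; ring

lemma one_le_prod_max (s : Multiset ℂ) :
    1 ≤ (s.map fun r => max 1 (Complex.abs r)).prod := by
  apply Multiset.one_le_prod
  intro a ha
  obtain ⟨r, _, rfl⟩ := Multiset.mem_map.1 ha
  exact le_max_left _ _

lemma prod_max_nonneg (s : Multiset ℂ) :
    0 ≤ (s.map fun r => max 1 (Complex.abs r)).prod :=
  le_trans zero_le_one (one_le_prod_max s)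

lemma mahler_nonneg (p : Polynomial ℂ) : 0 ≤ mahler p :=
  mul_nonneg (AbsoluteValue.nonneg _ _) (prod_max_nonneg _)

lemma mahler_pos {p : Polynomial ℂ} (hp : p ≠ 0) : 0 < mahler p := by
  apply mul_pos
  · exact (AbsoluteValue.pos _ (leadingCoeff_ne_zero.2 hp))
  · exact lt_of_lt_of_le zero_lt_one (one_le_prod_max _)

/-- Landau's inequality. -/
theorem mahler_le_sqrt_l2sq (p : Polynomial ℂ) (hp : p ≠ 0) :
    mahler p ≤ Real.sqrt (l2sq p) := by
  have hsp : Splits p := IsAlgClosed.splits p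
  set q := C p.leadingCoeff * (p.roots.map flip).prod with hq
  have h1 : l2sq q = l2sq p := by
    conv_rhs => rw [hsp.eq_prod_roots]
    exact l2sq_prod p.roots (C p.leadingCoeff)
  have h2 : Complex.abs q.leadingCoeff = mahler p := by
    rw [hq, leadingCoeff_mul, leadingCoeff_C, map_mul, leadingCoeff_multiset_prod,
      Multiset.map_map, map_multiset_prod Complex.abs, Multiset.map_map]
    unfold mahler
    congr 1
    apply congrArg
    apply Multiset.map_congr rfl
    intro r _
    exact abs_leadingCoeff_flip r
  have hq0 : q ≠ 0 := by
    intro h0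
    have := h2
    rw [h0] at this
    rw [leadingCoeff_zero, Complex.abs.map_zero] at this
    exact absurd this.symm (ne_of_gt (mahler_pos hp))
  have h3 : mahler p ^ 2 ≤ l2sq q := by
    rw [← h2]
    unfold l2sq
    have hmem : q.natDegree ∈ q.support := natDegree_mem_support_of_nonzero hq0
    exact Finset.single_le_sum (f := fun k => Complex.abs (q.coeff k) ^ 2)
      (fun k _ => sq_nonneg _) hmem
  rw [h1] at h3
  calc mahler p = Real.sqrt (mahler p ^ 2) := (Real.sqrt_sq (mahler_nonneg p)).symm
    _ ≤ Real.sqrt (l2sq p) := Real.sqrt_le_sqrt h3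

lemma mahler_mul {p q : Polynomial ℂ} (hp : p ≠ 0) (hq : q ≠ 0) :
    mahler (p * q) = mahler p * mahler q := by
  unfold mahler
  rw [leadingCoeff_mul, map_mul, roots_mul (mul_ne_zero hp hq), Multiset.map_add,
    Multiset.prod_add]
  ring

lemma one_le_mahler_int {f : Polynomial ℤ} (hf : f ≠ 0) :
    1 ≤ mahler (f.map (Int.castRingHom ℂ)) := by
  have hinj : Function.Injective (Int.castRingHom ℂ) := Int.cast_injective
  have hlc : (f.map (Int.castRingHom ℂ)).leadingCoeff = ((f.leadingCoeff : ℤ) : ℂ) := by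
    unfold Polynomial.leadingCoeff
    rw [natDegree_map_eq_of_injective hinj, coeff_map]
    rfl
  have h1 : 1 ≤ Complex.abs (f.map (Int.castRingHom ℂ)).leadingCoeff := by
    rw [hlc, Complex.abs_intCast]
    have hne : f.leadingCoeff ≠ 0 := leadingCoeff_ne_zero.2 hf
    exact_mod_cast Int.one_le_abs hne
  have h2 := one_le_prod_max (f.map (Int.castRingHom ℂ)).roots
  unfold mahler
  nlinarith

lemma choose_le_two_pow (n j : ℕ) : n.choose j ≤ 2 ^ n := by
  by_cases hj : j ≤ n
  · calc n.choose j ≤ ∑ m ∈ Finset.range (n + 1), n.choose m :=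
        Finset.single_le_sum (f := fun m => n.choose m) (fun _ _ => Nat.zero_le _)
          (Finset.mem_range.2 (by omega))
      _ = 2 ^ n := Nat.sum_range_choose n
  · rw [Nat.choose_eq_zero_of_lt (by omega)]
    exact Nat.zero_le _

lemma abs_multiset_sum (s : Multiset ℂ) :
    Complex.abs s.sum ≤ (s.map Complex.abs).sum := by
  induction s using Multiset.induction with
  | empty => simp
  | cons a s ih =>
    rw [Multiset.sum_cons, Multiset.map_cons, Multiset.sum_cons]
    exact le_trans (AbsoluteValue.add_le _ _ _) (by linarith)

lemma prod_abs_nonneg (t : Multiset ℂ) : 0 ≤ (t.map Complex.abs).prod := by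
  apply Multiset.prod_nonneg
  intro a ha
  obtain ⟨r, _, rfl⟩ := Multiset.mem_map.1 ha
  exact AbsoluteValue.nonneg _ _

lemma prod_abs_le_prod_max_self (t : Multiset ℂ) :
    (t.map Complex.abs).prod ≤ (t.map fun r => max 1 (Complex.abs r)).prod := by
  induction t using Multiset.induction with
  | empty => simp
  | cons a t ih =>
    rw [Multiset.map_cons, Multiset.prod_cons, Multiset.map_cons, Multiset.prod_cons]
    exact mul_le_mul (le_max_right _ _) ih (prod_abs_nonneg t)
      (le_trans zero_le_one (le_max_left _ _))

lemma prod_abs_le_prod_max {t s : Multiset ℂ} (hts : t ≤ s) :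
    (t.map Complex.abs).prod ≤ (s.map fun r => max 1 (Complex.abs r)).prod := by
  obtain ⟨u, rfl⟩ := Multiset.le_iff_exists_add.1 hts
  rw [Multiset.map_add, Multiset.prod_add]
  calc (t.map Complex.abs).prod ≤ (t.map fun r => max 1 (Complex.abs r)).prod :=
      prod_abs_le_prod_max_self t
    _ ≤ (t.map fun r => max 1 (Complex.abs r)).prod
          * (u.map fun r => max 1 (Complex.abs r)).prod :=
      le_mul_of_one_le_right (prod_max_nonneg t) (one_le_prod_max u)

lemma abs_esymm_le (s : Multiset ℂ) (j : ℕ) :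
    Complex.abs (s.esymm j)
      ≤ (Multiset.card s).choose j * (s.map fun r => max 1 (Complex.abs r)).prod := by
  unfold Multiset.esymm
  calc Complex.abs ((s.powersetCard j).map Multiset.prod).sum
      ≤ (((s.powersetCard j).map Multiset.prod).map Complex.abs).sum :=
        abs_multiset_sum _
    _ ≤ Multiset.card (((s.powersetCard j).map Multiset.prod).map Complex.abs)
          • (s.map fun r => max 1 (Complex.abs r)).prod := by
        apply Multiset.sum_le_card_nsmul
        intro x hx
        rw [Multiset.map_map] at hx
        obtain ⟨t, ht, rfl⟩ := Multiset.mem_map.1 hx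
        have hts : t ≤ s := (Multiset.mem_powersetCard.1 ht).1
        simp only [Function.comp_apply]
        rw [map_multiset_prod Complex.abs]
        exact prod_abs_le_prod_max hts
    _ = (Multiset.card s).choose j * (s.map fun r => max 1 (Complex.abs r)).prod := by
        rw [Multiset.card_map, Multiset.card_map, Multiset.card_powersetCard,
          nsmul_eq_mul]

lemma coeff_le_mahler (q : Polynomial ℂ) (k : ℕ) :
    Complex.abs (q.coeff k) ≤ 2 ^ q.natDegree * mahler q := by
  by_cases hq : q = 0
  · simp [hq, mahler]
  by_cases hk : k ≤ q.natDegree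
  · have hsp : Splits q := IsAlgClosed.splits q
    rw [coeff_eq_esymm_roots_of_splits hsp hk]
    have habs1 : Complex.abs ((-1 : ℂ) ^ (q.natDegree - k)) = 1 := by
      simp
    rw [map_mul, map_mul, habs1, mul_one]
    have hcard : Multiset.card q.roots = q.natDegree := splits_iff_card_roots.1 hsp
    have h1 := abs_esymm_le q.roots (q.natDegree - k)
    rw [hcard] at h1
    have h2 : (q.natDegree.choose (q.natDegree - k) : ℝ) ≤ 2 ^ q.natDegree := by
      exact_mod_cast choose_le_two_pow q.natDegree (q.natDegree - k)
    have hlcabs : 0 ≤ Complex.abs q.leadingCoeff := AbsoluteValue.nonneg _ _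
    have hprodpos := prod_max_nonneg q.roots
    calc Complex.abs q.leadingCoeff * Complex.abs (q.roots.esymm (q.natDegree - k))
        ≤ Complex.abs q.leadingCoeff
            * ((q.natDegree.choose (q.natDegree - k) : ℝ)
              * (q.roots.map fun r => max 1 (Complex.abs r)).prod) := by
          apply mul_le_mul_of_nonneg_left h1 hlcabs
      _ ≤ Complex.abs q.leadingCoeff
            * ((2 : ℝ) ^ q.natDegree * (q.roots.map fun r => max 1 (Complex.abs r)).prod) := by
          apply mul_le_mul_of_nonneg_left _ hlcabs
          exact mul_le_mul_of_nonneg_right h2 hprodpos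
      _ = 2 ^ q.natDegree * mahler q := by unfold mahler; ring
  · rw [coeff_eq_zero_of_natDegree_lt (by omega), Complex.abs.map_zero]
    exact mul_nonneg (by positivity) (mahler_nonneg q)

end Mignotte

/-- Let f₁,…,f_m ∈ ℤ[x], not all zero, with d = max deg(f_i) and
h = max height(f_i), and let g = gcd(f₁,…,f_m) in ℤ[x].
Then height(g) ≤ (1/2)·log(d+1) + d·log 2 + h. -/
theorem stmt3 {m : ℕ} (f : Fin m → Polynomial ℤ) (hne : ∃ i, f i ≠ 0)
    (d : ℕ) (hd : ∀ i, (f i).natDegree ≤ d)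
    (h : ℝ) (hh : ∀ i, polyHeight (f i) ≤ h)
    (g : Polynomial ℤ) (hgdvd : ∀ i, g ∣ f i)
    (hggreatest : ∀ c : Polynomial ℤ, (∀ i, c ∣ f i) → c ∣ g) :
    polyHeight g ≤ (1 / 2) * Real.log ((d : ℝ) + 1) + (d : ℝ) * Real.log 2 + h := by
  classical
  obtain ⟨i₀, hi₀⟩ := hne
  set F := f i₀ with hF
  have hg0 : g ≠ 0 := by
    intro h0
    have := hgdvd i₀
    rw [h0, zero_dvd_iff] at this
    exact hi₀ this
  obtain ⟨q, hq⟩ := hgdvd i₀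
  have hq0 : q ≠ 0 := by
    intro h0
    rw [h0, mul_zero] at hq
    exact hi₀ hq
  have hinj : Function.Injective (Int.castRingHom ℂ) := Int.cast_injective
  set φ := Int.castRingHom ℂ with hφ
  set G := g.map φ with hG
  set Fc := F.map φ with hFcdef
  have hG0 : G ≠ 0 := (Polynomial.map_ne_zero_iff hinj).2 hg0
  have hQ0 : q.map φ ≠ 0 := (Polynomial.map_ne_zero_iff hinj).2 hq0
  have hFc : Fc = G * q.map φ := by rw [hFcdef, hG, hF, hq, Polynomial.map_mul]
  have hF0c : Fc ≠ 0 := (Polynomial.map_ne_zero_iff hinj).2 hi₀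
  have hmm : Mignotte.mahler G ≤ Mignotte.mahler Fc := by
    rw [hFc, Mignotte.mahler_mul hG0 hQ0]
    have h1 : 1 ≤ Mignotte.mahler (q.map φ) := Mignotte.one_le_mahler_int hq0
    nlinarith [Mignotte.mahler_nonneg G]
  have hlandau := Mignotte.mahler_le_sqrt_l2sq Fc hF0c
  set B := (Finset.range (F.natDegree + 1)).sup (fun k => (F.coeff k).natAbs) with hB
  have hB1 : 1 ≤ B := by
    have hm : F.natDegree ∈ Finset.range (F.natDegree + 1) := Finset.self_mem_range_succ _
    have hle : (F.coeff F.natDegree).natAbs ≤ B :=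
      Finset.le_sup (f := fun k => (F.coeff k).natAbs) hm
    have hlc : F.coeff F.natDegree ≠ 0 := leadingCoeff_ne_zero.2 hi₀
    have hpos : 1 ≤ (F.coeff F.natDegree).natAbs := Int.natAbs_pos.2 hlc
    omega
  have hcoeffF : ∀ k, Complex.abs (Fc.coeff k) ≤ (B : ℝ) := by
    intro k
    rw [hFcdef, Polynomial.coeff_map, show φ (F.coeff k) = ((F.coeff k : ℤ) : ℂ) from rfl,
      Complex.abs_intCast]
    by_cases hk : k ≤ F.natDegree
    · have hle := Finset.le_sup (f := fun j => (F.coeff j).natAbs)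
        (Finset.mem_range.2 (by omega : k < F.natDegree + 1))
      have h2 : |F.coeff k| ≤ (B : ℤ) := by
        rw [Int.abs_eq_natAbs]
        exact_mod_cast hle
      exact_mod_cast h2
    · rw [coeff_eq_zero_of_natDegree_lt (by omega)]
      simp
  have hl2 : Mignotte.l2sq Fc ≤ ((d : ℝ) + 1) * (B : ℝ) ^ 2 := by
    have hdeg : Fc.natDegree < d + 1 := by
      rw [hFcdef, natDegree_map_eq_of_injective hinj]
      exact Nat.lt_succ_of_le (hd i₀)
    rw [Mignotte.l2sq_eq Fc hdeg]
    calc ∑ k ∈ Finset.range (d + 1), Complex.abs (Fc.coeff k) ^ 2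
        ≤ (Finset.range (d + 1)).card • ((B : ℝ) ^ 2) := by
          apply Finset.sum_le_card_nsmul
          intro k _
          have h1 := hcoeffF k
          have h2 : (0 : ℝ) ≤ Complex.abs (Fc.coeff k) := AbsoluteValue.nonneg _ _
          nlinarith
      _ = ((d : ℝ) + 1) * (B : ℝ) ^ 2 := by
          rw [Finset.card_range, nsmul_eq_mul]
          push_cast
          ring
  have hsq : Real.sqrt (Mignotte.l2sq Fc) ≤ Real.sqrt ((d : ℝ) + 1) * (B : ℝ) := by
    calc Real.sqrt (Mignotte.l2sq Fc) ≤ Real.sqrt (((d : ℝ) + 1) * (B : ℝ) ^ 2) :=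
        Real.sqrt_le_sqrt hl2
      _ = Real.sqrt ((d : ℝ) + 1) * Real.sqrt ((B : ℝ) ^ 2) :=
        Real.sqrt_mul (by positivity) _
      _ = Real.sqrt ((d : ℝ) + 1) * (B : ℝ) := by rw [Real.sqrt_sq (by positivity)]
  set S := (Finset.range (g.natDegree + 1)).sup (fun k => (g.coeff k).natAbs) with hS
  have hS1 : 1 ≤ S := by
    have hm : g.natDegree ∈ Finset.range (g.natDegree + 1) := Finset.self_mem_range_succ _
    have hle : (g.coeff g.natDegree).natAbs ≤ S :=
      Finset.le_sup (f := fun k => (g.coeff k).natAbs) hm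
    have hlc : g.coeff g.natDegree ≠ 0 := leadingCoeff_ne_zero.2 hg0
    have hpos : 1 ≤ (g.coeff g.natDegree).natAbs := Int.natAbs_pos.2 hlc
    omega
  obtain ⟨k₀, hk₀mem, hk₀⟩ := Finset.exists_mem_eq_sup (Finset.range (g.natDegree + 1))
    ⟨0, Finset.mem_range.2 (Nat.succ_pos _)⟩ (fun k => (g.coeff k).natAbs)
  have hdegG : G.natDegree ≤ d := by
    rw [hG, natDegree_map_eq_of_injective hinj]
    exact le_trans (natDegree_le_of_dvd ⟨q, hq⟩ hi₀) (hd i₀)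
  have hSle : (S : ℝ) ≤ 2 ^ d * (Real.sqrt ((d : ℝ) + 1) * (B : ℝ)) := by
    have h1 : (S : ℝ) = Complex.abs (G.coeff k₀) := by
      rw [hG, Polynomial.coeff_map, show φ (g.coeff k₀) = ((g.coeff k₀ : ℤ) : ℂ) from rfl,
        Complex.abs_intCast, hS, hk₀, Nat.cast_natAbs, Int.cast_abs]
    have h2 := Mignotte.coeff_le_mahler G k₀
    have h3 : (2 : ℝ) ^ G.natDegree ≤ 2 ^ d := by
      apply pow_le_pow_right₀ (by norm_num) hdegG
    have h4 : Mignotte.mahler G ≤ Real.sqrt ((d : ℝ) + 1) * (B : ℝ) :=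
      le_trans hmm (le_trans hlandau hsq)
    have h5 : (0 : ℝ) ≤ Mignotte.mahler G := Mignotte.mahler_nonneg G
    have h6 : (0 : ℝ) ≤ (2 : ℝ) ^ d := by positivity
    calc (S : ℝ) = Complex.abs (G.coeff k₀) := h1
      _ ≤ 2 ^ G.natDegree * Mignotte.mahler G := h2
      _ ≤ 2 ^ d * Mignotte.mahler G := mul_le_mul_of_nonneg_right h3 h5
      _ ≤ 2 ^ d * (Real.sqrt ((d : ℝ) + 1) * (B : ℝ)) := mul_le_mul_of_nonneg_left h4 h6
  have hheight : polyHeight g = Real.log (S : ℝ) := by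
    unfold polyHeight
    rw [← hS]
  have hlogB : Real.log (B : ℝ) ≤ h := by
    have := hh i₀
    unfold polyHeight at this
    rw [← hF, ← hB] at this
    exact this
  have hSpos : (0 : ℝ) < (S : ℝ) := by exact_mod_cast hS1
  have hBpos : (0 : ℝ) < (B : ℝ) := by exact_mod_cast hB1
  have hsqrtpos : (0 : ℝ) < Real.sqrt ((d : ℝ) + 1) := Real.sqrt_pos.2 (by positivity)
  have hloglog : Real.log (S : ℝ) ≤ Real.log (2 ^ d * (Real.sqrt ((d : ℝ) + 1) * (B : ℝ))) :=
    Real.log_le_log hSpos hSle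
  have hsplit : Real.log (2 ^ d * (Real.sqrt ((d : ℝ) + 1) * (B : ℝ)))
      = (d : ℝ) * Real.log 2 + (Real.log ((d : ℝ) + 1) / 2 + Real.log (B : ℝ)) := by
    rw [Real.log_mul (by positivity) (by positivity),
      Real.log_mul (ne_of_gt hsqrtpos) (ne_of_gt hBpos), Real.log_pow,
      Real.log_sqrt (by positivity)]
  rw [hheight]
  rw [hsplit] at hloglog
  linarith
end

section
/- Let f₁,…,f_m ∈ ℤ[x] be polynomials, not all zero, with d = max_i deg(f_i) and h = max_i height(f_i), and let g = gcd(f₁,…,f_m) in ℤ[x]. Then for every i with f_i ≠ 0, the cofactor f_i/g (the polynomial q_i ∈ ℤ[x] with g·q_i = f_i) satisfies height(f_i/g) ≤ (1/2)·log(d+1) + d·log 2 + h. -/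
open Polynomial

open Finset


noncomputable def N2 (p : Polynomial ℂ) : ℝ :=
  ∑ i ∈ Finset.range (p.natDegree + 1), Complex.normSq (p.coeff i)

lemma N2_eq (p : Polynomial ℂ) {B : ℕ} (hB : p.natDegree + 1 ≤ B) :
    N2 p = ∑ i ∈ Finset.range B, Complex.normSq (p.coeff i) := by
  rw [N2]
  apply Finset.sum_subset (Finset.range_subset_range.2 hB)
  intro x _ hx
  rw [Finset.mem_range, not_lt] at hx
  rw [p.coeff_eq_zero_of_natDegree_lt (by omega), Complex.normSq_zero]

lemma N2_nonneg (p : Polynomial ℂ) : 0 ≤ N2 p :=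
  Finset.sum_nonneg fun _ _ => Complex.normSq_nonneg _

lemma coeff_sq_le_N2 (p : Polynomial ℂ) (k : ℕ) :
    Complex.normSq (p.coeff k) ≤ N2 p := by
  rcases le_or_gt k p.natDegree with hk | hk
  · exact Finset.single_le_sum (f := fun i => Complex.normSq (p.coeff i))
      (fun _ _ => Complex.normSq_nonneg _) (Finset.mem_range.2 (by omega))
  · rw [p.coeff_eq_zero_of_natDegree_lt hk, Complex.normSq_zero]; exact N2_nonneg p

lemma sum_normSq_X_mul (h : Polynomial ℂ) {B : ℕ} (hB : h.natDegree + 1 ≤ B) :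
    ∑ i ∈ Finset.range (B+1), Complex.normSq ((X * h).coeff i)
      = ∑ i ∈ Finset.range (B+1), Complex.normSq (h.coeff i) := by
  rw [Finset.sum_range_succ', Finset.sum_range_succ]
  simp [Polynomial.coeff_X_mul,
    Polynomial.coeff_eq_zero_of_natDegree_lt (show h.natDegree < B by omega)]

private lemma nsq1 (α u v : ℂ) : Complex.normSq (u - α * v)
    = Complex.normSq u + Complex.normSq α * Complex.normSq v
      - 2 * ((starRingEnd ℂ α) * (u * (starRingEnd ℂ v))).re := by
  rw [Complex.normSq_sub, Complex.normSq_mul]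
  congr 2
  rw [map_mul]; ring_nf

private lemma nsq2 (α u v : ℂ) : Complex.normSq ((starRingEnd ℂ α) * u - v)
    = Complex.normSq α * Complex.normSq u + Complex.normSq v
      - 2 * ((starRingEnd ℂ α) * (u * (starRingEnd ℂ v))).re := by
  rw [Complex.normSq_sub, Complex.normSq_mul, Complex.normSq_conj]
  congr 2
  ring_nf

/-- The key flip identity: replacing `X - α` by `conj α * X - 1` preserves the L2 norm. -/
lemma N2_flip (α : ℂ) (h : Polynomial ℂ) :
    N2 ((X - C α) * h) = N2 ((C (starRingEnd ℂ α) * X - C 1) * h) := by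
  rcases eq_or_ne h 0 with rfl | hh
  · simp [N2]
  set n := h.natDegree with hn
  have d1 : ((X - C α) * h).natDegree + 1 ≤ n + 2 := by
    have h1 := Polynomial.natDegree_mul_le (p := X - C α) (q := h)
    have h2 := Polynomial.natDegree_X_sub_C_le (r := α)
    omega
  have d2 : ((C (starRingEnd ℂ α) * X - C 1) * h).natDegree + 1 ≤ n + 2 := by
    have h1 := Polynomial.natDegree_mul_le (p := C (starRingEnd ℂ α) * X - C 1) (q := h)
    have h2 : (C (starRingEnd ℂ α) * X - C 1).natDegree ≤ 1 := by
      apply le_trans (Polynomial.natDegree_sub_le _ _)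
      simp only [Polynomial.natDegree_C, max_le_iff]
      constructor
      · exact le_trans (Polynomial.natDegree_mul_le) (by simp)
      · omega
    omega
  rw [N2_eq _ d1, N2_eq _ d2]
  have e1 : ∀ i ∈ Finset.range (n + 2),
      Complex.normSq (((X - C α) * h).coeff i)
        = Complex.normSq ((X * h).coeff i) + Complex.normSq α * Complex.normSq (h.coeff i)
          - 2 * ((starRingEnd ℂ α) * ((X * h).coeff i * (starRingEnd ℂ (h.coeff i)))).re := by
    intro i _
    rw [sub_mul, Polynomial.coeff_sub, Polynomial.coeff_C_mul, nsq1]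
  have e2 : ∀ i ∈ Finset.range (n + 2),
      Complex.normSq (((C (starRingEnd ℂ α) * X - C 1) * h).coeff i)
        = Complex.normSq α * Complex.normSq ((X * h).coeff i) + Complex.normSq (h.coeff i)
          - 2 * ((starRingEnd ℂ α) * ((X * h).coeff i * (starRingEnd ℂ (h.coeff i)))).re := by
    intro i _
    rw [sub_mul, Polynomial.coeff_sub, mul_assoc, Polynomial.coeff_C_mul,
      Polynomial.coeff_C_mul, one_mul, nsq2]
  rw [Finset.sum_congr rfl e1, Finset.sum_congr rfl e2]
  have hs : ∑ i ∈ Finset.range (n + 1 + 1), Complex.normSq ((X * h).coeff i)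
      = ∑ i ∈ Finset.range (n + 1 + 1), Complex.normSq (h.coeff i) :=
    sum_normSq_X_mul h le_rfl
  simp only [Finset.sum_sub_distrib, Finset.sum_add_distrib, ← Finset.mul_sum]
  rw [show n + 2 = n + 1 + 1 from rfl, hs]
  ring

noncomputable def flipfac (α : ℂ) : Polynomial ℂ :=
  if 1 < ‖α‖ then C (starRingEnd ℂ α) * X - C 1 else X - C α

lemma N2_prod_flip (s : Multiset ℂ) : ∀ g : Polynomial ℂ,
    N2 (g * (s.map fun α => X - C α).prod) = N2 (g * (s.map flipfac).prod) := by
  induction s using Multiset.induction_on with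
  | empty => intro g; simp
  | cons a s ih =>
    intro g
    rw [Multiset.map_cons, Multiset.map_cons, Multiset.prod_cons, Multiset.prod_cons]
    calc N2 (g * ((X - C a) * (s.map fun α => X - C α).prod))
        = N2 ((g * (X - C a)) * (s.map fun α => X - C α).prod) := by ring_nf
      _ = N2 ((g * (X - C a)) * (s.map flipfac).prod) := ih (g * (X - C a))
      _ = N2 ((X - C a) * (g * (s.map flipfac).prod)) := by ring_nf
      _ = N2 (flipfac a * (g * (s.map flipfac).prod)) := by
          rw [flipfac]
          split
          · exact N2_flip a _
          · rfl
      _ = N2 (g * (flipfac a * (s.map flipfac).prod)) := by ring_nf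

lemma flipfac_leadingCoeff (α : ℂ) :
    ‖(flipfac α).leadingCoeff‖ = max 1 (‖α‖) := by
  rw [flipfac]
  split_ifs with hα
  · have hα0 : α ≠ 0 := by intro h0; rw [h0, norm_zero] at hα; linarith
    have h1 : (starRingEnd ℂ) α ≠ 0 := by
      intro hc
      exact hα0 (by simpa using congrArg (starRingEnd ℂ) hc)
    rw [show C ((starRingEnd ℂ) α) * X - C 1 = C ((starRingEnd ℂ) α) * X + C (-1) by
        rw [map_neg, ← sub_eq_add_neg],
      Polynomial.leadingCoeff_linear h1]
    simp [max_eq_right (le_of_lt hα), Complex.norm_conj]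
  · rw [Polynomial.leadingCoeff_X_sub_C]
    simp [max_eq_left (not_lt.1 hα)]

lemma flipfac_ne_zero (α : ℂ) : flipfac α ≠ 0 := by
  intro h
  have h2 := flipfac_leadingCoeff α
  rw [h, Polynomial.leadingCoeff_zero, norm_zero] at h2
  have h1 : (1:ℝ) ≤ max 1 (‖α‖) := le_max_left _ _
  linarith

noncomputable def Mah (p : Polynomial ℂ) : ℝ :=
  ‖p.leadingCoeff‖ * ((p.roots.map (fun α => max 1 (‖α‖))).prod)

lemma one_le_multiset_prod {s : Multiset ℝ} (h : ∀ x ∈ s, (1:ℝ) ≤ x) : 1 ≤ s.prod := by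
  induction s using Multiset.induction_on with
  | empty => simp
  | cons a t ih =>
    rw [Multiset.prod_cons]
    have h1 : (1:ℝ) ≤ a := h a (Multiset.mem_cons_self a t)
    have h2 : (1:ℝ) ≤ t.prod := ih fun x hx => h x (Multiset.mem_cons_of_mem hx)
    nlinarith

lemma one_le_maxprod (s : Multiset ℂ) :
    1 ≤ ((s.map (fun α => max 1 (‖α‖))).prod) := by
  apply one_le_multiset_prod
  intro x hx
  rcases Multiset.mem_map.1 hx with ⟨a, _, rfl⟩
  exact le_max_left _ _

lemma Mah_nonneg (p : Polynomial ℂ) : 0 ≤ Mah p :=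
  mul_nonneg (norm_nonneg _) (le_trans zero_le_one (one_le_maxprod _))

/-- Landau's inequality: the Mahler measure is at most the L2 norm. -/
lemma landau (p : Polynomial ℂ) (hp : p ≠ 0) : Mah p ^ 2 ≤ N2 p := by
  have hsplit : p.Splits := IsAlgClosed.splits p
  have hfact := hsplit.eq_prod_roots
  set F : Polynomial ℂ := C p.leadingCoeff * (p.roots.map flipfac).prod with hF
  have hN : N2 p = N2 F := by
    conv_lhs => rw [hfact]
    exact N2_prod_flip p.roots (C p.leadingCoeff)
  have hlcF : ‖F.leadingCoeff‖ = Mah p := by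
    rw [hF, Polynomial.leadingCoeff_mul, Polynomial.leadingCoeff_multiset_prod,
      Polynomial.leadingCoeff_C, norm_mul, Mah]
    congr 1
    rw [Multiset.map_map, show ∀ s : Multiset ℂ, ‖s.prod‖ = (s.map (‖·‖)).prod from fun s => map_multiset_prod normHom s, Multiset.map_map]
    congr 1
    apply Multiset.map_congr rfl
    intro x _
    exact flipfac_leadingCoeff x
  calc Mah p ^ 2 = ‖F.leadingCoeff‖ ^ 2 := by rw [hlcF]
    _ = Complex.normSq F.leadingCoeff := Complex.sq_norm _
    _ ≤ N2 F := coeff_sq_le_N2 F F.natDegree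
    _ = N2 p := hN.symm

lemma Mah_mul {p q : Polynomial ℂ} (hpq : p * q ≠ 0) : Mah (p * q) = Mah p * Mah q := by
  rw [Mah, Mah, Mah, Polynomial.leadingCoeff_mul, Polynomial.roots_mul hpq,
    Multiset.map_add, Multiset.prod_add, norm_mul]
  ring

lemma coeff_prod_bound (s : Multiset ℂ) : ∀ k : ℕ,
    ‖(((s.map fun α => X - C α).prod).coeff k)‖
      ≤ (Multiset.card s).choose k * ((s.map (fun α => max 1 (‖α‖))).prod) := by
  induction s using Multiset.induction_on with
  | empty =>
    intro k
    match k with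
    | 0 => simp
    | (k+1) => simp [Polynomial.coeff_one]
  | cons a s ih =>
    intro k
    have hPi : (0:ℝ) ≤ ((s.map (fun α => max 1 (‖α‖))).prod) :=
      le_trans zero_le_one (one_le_maxprod s)
    have hm : (1:ℝ) ≤ max 1 (‖a‖) := le_max_left _ _
    have ha : ‖a‖ ≤ max 1 (‖a‖) := le_max_right _ _
    rw [Multiset.map_cons, Multiset.map_cons, Multiset.prod_cons, Multiset.prod_cons,
      Multiset.card_cons]
    set P := (s.map fun α => X - C α).prod with hP
    have hcoeff : ((X - C a) * P).coeff k = (X * P).coeff k - a * P.coeff k := by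
      rw [sub_mul, Polynomial.coeff_sub, Polynomial.coeff_C_mul]
    rw [hcoeff]
    match k with
    | 0 =>
      rw [Polynomial.mul_coeff_zero, Polynomial.coeff_X_zero, zero_mul, zero_sub, norm_neg,
        norm_mul]
      calc ‖a‖ * ‖(P.coeff 0)‖
          ≤ max 1 (‖a‖) * ((Multiset.card s).choose 0 * ((s.map (fun α => max 1 (‖α‖))).prod)) := by
            apply mul_le_mul ha (ih 0) (norm_nonneg _) (by linarith)
        _ = (Multiset.card s + 1).choose 0 * (max 1 (‖a‖) * ((s.map (fun α => max 1 (‖α‖))).prod)) := by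
            simp
            try ring
    | (k+1) =>
      rw [Polynomial.coeff_X_mul]
      calc ‖(P.coeff k - a * P.coeff (k+1))‖
          ≤ ‖(P.coeff k)‖ + ‖a‖ * ‖(P.coeff (k+1))‖ := by
            refine le_trans (norm_sub_le _ _) ?_
            rw [norm_mul]
        _ ≤ (Multiset.card s).choose k * ((s.map (fun α => max 1 (‖α‖))).prod)
            + max 1 (‖a‖) * ((Multiset.card s).choose (k+1) * ((s.map (fun α => max 1 (‖α‖))).prod)) := by
            apply add_le_add (ih k)
            exact mul_le_mul ha (ih (k+1)) (norm_nonneg _) (by linarith)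
        _ ≤ max 1 (‖a‖) * ((Multiset.card s).choose k * ((s.map (fun α => max 1 (‖α‖))).prod))
            + max 1 (‖a‖) * ((Multiset.card s).choose (k+1) * ((s.map (fun α => max 1 (‖α‖))).prod)) := by
            have hnn : (0:ℝ) ≤ (Multiset.card s).choose k * ((s.map (fun α => max 1 (‖α‖))).prod) :=
              mul_nonneg (Nat.cast_nonneg _) hPi
            nlinarith
        _ = (Multiset.card s + 1).choose (k+1) * (max 1 (‖a‖) * ((s.map (fun α => max 1 (‖α‖))).prod)) := by
            rw [Nat.choose_succ_succ, Nat.cast_add]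
            ring

lemma choose_le_two_pow (n k : ℕ) : n.choose k ≤ 2 ^ n := by
  rcases le_or_gt k n with hk | hk
  · calc n.choose k ≤ ∑ m ∈ Finset.range (n+1), n.choose m :=
        Finset.single_le_sum (f := fun m => n.choose m) (fun _ _ => Nat.zero_le _)
          (Finset.mem_range.2 (by omega))
      _ = 2 ^ n := Nat.sum_range_choose n
  · rw [Nat.choose_eq_zero_of_lt hk]; exact Nat.zero_le _

lemma abs_intCast' (m : ℤ) : ‖((m : ℂ))‖ = (m.natAbs : ℝ) := by
  rw [← Complex.ofReal_intCast, Complex.norm_real, Real.norm_eq_abs]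
  rw [Nat.cast_natAbs, Int.cast_abs]

noncomputable def cmap (p : Polynomial ℤ) : Polynomial ℂ := p.map (Int.castRingHom ℂ)

lemma cmap_ne_zero {p : Polynomial ℤ} (hp : p ≠ 0) : cmap p ≠ 0 := by
  rw [cmap, ne_eq, Polynomial.map_eq_zero_iff (by exact Int.cast_injective)]
  exact hp

lemma cmap_natDegree (p : Polynomial ℤ) : (cmap p).natDegree = p.natDegree :=
  Polynomial.natDegree_map_eq_of_injective (by exact Int.cast_injective) p

lemma cmap_coeff (p : Polynomial ℤ) (k : ℕ) :
    (cmap p).coeff k = ((p.coeff k : ℤ) : ℂ) := by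
  rw [cmap, Polynomial.coeff_map]; rfl

lemma Mah_cmap_ge_one {p : Polynomial ℤ} (hp : p ≠ 0) : 1 ≤ Mah (cmap p) := by
  rw [Mah]
  have hlc : (cmap p).leadingCoeff = ((p.leadingCoeff : ℤ) : ℂ) :=
    Polynomial.leadingCoeff_map_of_injective (f := Int.castRingHom ℂ) (by exact Int.cast_injective) p
  have h1 : 1 ≤ ‖(cmap p).leadingCoeff‖ := by
    rw [hlc, abs_intCast']
    have : 1 ≤ p.leadingCoeff.natAbs :=
      Int.natAbs_pos.2 (Polynomial.leadingCoeff_ne_zero.2 hp)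
    exact_mod_cast this
  have h2 := one_le_maxprod (cmap p).roots
  nlinarith

set_option maxHeartbeats 1000000 in
/-- Main bound: each coefficient of a divisor `q` of `p` (in `ℤ[X]`). -/
lemma coeff_div_bound {p q r : Polynomial ℤ} (hp : p ≠ 0) (hpqr : r * q = p)
    (k : ℕ) (d : ℕ) (hdq : q.natDegree ≤ d) (hdp : p.natDegree ≤ d) :
    ((q.coeff k).natAbs : ℝ) ≤ 2 ^ d * (Real.sqrt ((d:ℝ)+1) *
      (((Finset.range (p.natDegree + 1)).sup fun j => (p.coeff j).natAbs : ℕ) : ℝ)) := by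
  set A : ℕ := (Finset.range (p.natDegree + 1)).sup fun j => (p.coeff j).natAbs with hA
  have hqne : q ≠ 0 := by rintro rfl; rw [mul_zero] at hpqr; exact hp hpqr.symm
  have hrne : r ≠ 0 := by rintro rfl; rw [zero_mul] at hpqr; exact hp hpqr.symm
  set P := cmap p with hP
  set Q := cmap q with hQ
  set R := cmap r with hR
  have hPne : P ≠ 0 := cmap_ne_zero hp
  have hQne : Q ≠ 0 := cmap_ne_zero hqne
  have hRQ : R * Q = P := by
    rw [hP, hQ, hR, cmap, cmap, cmap, ← Polynomial.map_mul, hpqr]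
  have hsplit : Q.Splits := IsAlgClosed.splits Q
  have hfact := hsplit.eq_prod_roots
  have hcard : Multiset.card Q.roots = Q.natDegree := by
    have h1 := hsplit.natDegree_eq_card_roots
    omega
  -- Step B : |Q.coeff k| ≤ 2^d * Mah Q
  have hstepB : ‖(Q.coeff k)‖ ≤ 2 ^ d * Mah Q := by
    have hc : Q.coeff k = Q.leadingCoeff * ((Q.roots.map fun a => X - C a).prod.coeff k) := by
      conv_lhs => rw [hfact]
      rw [Polynomial.coeff_C_mul]
    rw [hc, norm_mul]
    have hb := coeff_prod_bound Q.roots k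
    have hchoose : ((Multiset.card Q.roots).choose k : ℝ) ≤ 2 ^ d := by
      have h1 : (Multiset.card Q.roots).choose k ≤ 2 ^ (Multiset.card Q.roots) :=
        choose_le_two_pow _ _
      have h2 : Multiset.card Q.roots ≤ d := by
        rw [hcard, hQ, cmap_natDegree]; exact hdq
      have h3 : (2:ℕ) ^ (Multiset.card Q.roots) ≤ 2 ^ d := Nat.pow_le_pow_right (by norm_num) h2
      exact_mod_cast le_trans h1 h3
    have hmp := one_le_maxprod Q.roots
    have habs : (0:ℝ) ≤ ‖Q.leadingCoeff‖ := norm_nonneg _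
    have step1 := mul_le_mul_of_nonneg_left hb habs
    have step2 : ‖Q.leadingCoeff‖ *
          (((Multiset.card Q.roots).choose k : ℝ) * ((Q.roots.map (fun α => max 1 (‖α‖))).prod))
        ≤ ‖Q.leadingCoeff‖ *
          ((2:ℝ) ^ d * ((Q.roots.map (fun α => max 1 (‖α‖))).prod)) := by
      apply mul_le_mul_of_nonneg_left _ habs
      apply mul_le_mul_of_nonneg_right hchoose (by linarith)
    have step3 : ‖Q.leadingCoeff‖ *
          ((2:ℝ) ^ d * ((Q.roots.map (fun α => max 1 (‖α‖))).prod))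
        = 2 ^ d * Mah Q := by rw [Mah]; ring
    linarith
  -- Step C : Mah Q ≤ Mah P
  have hstepC : Mah Q ≤ Mah P := by
    have hmul : Mah P = Mah R * Mah Q := by rw [← hRQ]; exact Mah_mul (by rw [hRQ]; exact hPne)
    have h1 : 1 ≤ Mah R := Mah_cmap_ge_one hrne
    nlinarith [Mah_nonneg Q]
  -- Step D : Mah P ≤ sqrt (N2 P)
  have hstepD : Mah P ≤ Real.sqrt (N2 P) := by
    have h1 := landau P hPne
    calc Mah P = Real.sqrt (Mah P ^ 2) := (Real.sqrt_sq (Mah_nonneg P)).symm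
      _ ≤ Real.sqrt (N2 P) := Real.sqrt_le_sqrt h1
  -- Step E : N2 P ≤ (d+1) * A^2
  have hstepE : N2 P ≤ ((d:ℝ) + 1) * (A:ℝ)^2 := by
    have hdeg : P.natDegree = p.natDegree := cmap_natDegree p
    rw [N2_eq P (B := p.natDegree + 1) (by omega)]
    have hterm : ∀ j ∈ Finset.range (p.natDegree + 1),
        Complex.normSq (P.coeff j) ≤ (A:ℝ)^2 := by
      intro j hj
      rw [hP, cmap_coeff, ← Complex.sq_norm, abs_intCast']
      have h1 : (p.coeff j).natAbs ≤ A :=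
        Finset.le_sup (f := fun j => (p.coeff j).natAbs) hj
      have h2 : ((p.coeff j).natAbs : ℝ) ≤ (A:ℝ) := by exact_mod_cast h1
      have h3 : (0:ℝ) ≤ ((p.coeff j).natAbs : ℝ) := Nat.cast_nonneg _
      nlinarith
    calc ∑ j ∈ Finset.range (p.natDegree + 1), Complex.normSq (P.coeff j)
        ≤ ∑ _j ∈ Finset.range (p.natDegree + 1), (A:ℝ)^2 := Finset.sum_le_sum hterm
      _ = (p.natDegree + 1) * (A:ℝ)^2 := by
          rw [Finset.sum_const, Finset.card_range]; simp [nsmul_eq_mul]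
      _ ≤ ((d:ℝ) + 1) * (A:ℝ)^2 := by
          have : (p.natDegree : ℝ) ≤ (d:ℝ) := by exact_mod_cast hdp
          nlinarith [sq_nonneg (A:ℝ)]
  -- combine
  have hAnn : (0:ℝ) ≤ (A:ℝ) := Nat.cast_nonneg _
  have hsqrt : Real.sqrt (N2 P) ≤ Real.sqrt ((d:ℝ)+1) * (A:ℝ) := by
    calc Real.sqrt (N2 P) ≤ Real.sqrt (((d:ℝ) + 1) * (A:ℝ)^2) := Real.sqrt_le_sqrt hstepE
      _ = Real.sqrt ((d:ℝ)+1) * (A:ℝ) := by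
          rw [Real.sqrt_mul (by positivity), Real.sqrt_sq hAnn]
  have hcast : ((q.coeff k).natAbs : ℝ) = ‖(Q.coeff k)‖ := by
    rw [hQ, cmap_coeff, abs_intCast']
  rw [hcast]
  calc ‖(Q.coeff k)‖ ≤ 2 ^ d * Mah Q := hstepB
    _ ≤ 2 ^ d * Mah P := by
        apply mul_le_mul_of_nonneg_left hstepC (by positivity)
    _ ≤ 2 ^ d * Real.sqrt (N2 P) := by
        apply mul_le_mul_of_nonneg_left hstepD (by positivity)
    _ ≤ 2 ^ d * (Real.sqrt ((d:ℝ)+1) * (A:ℝ)) := by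
        apply mul_le_mul_of_nonneg_left hsqrt (by positivity)


/-- Let f₁,…,f_m ∈ ℤ[x], not all zero, with d = max deg(f_i) and
h = max height(f_i), and let g = gcd(f₁,…,f_m) in ℤ[x]. Then for every i with f_i ≠ 0,
the cofactor q_i ∈ ℤ[x] with g·q_i = f_i satisfies
height(f_i/g) ≤ (1/2)·log(d+1) + d·log 2 + h. -/
theorem stmt4 {m : ℕ} (f : Fin m → Polynomial ℤ) (hne : ∃ i, f i ≠ 0)
    (d : ℕ) (hd : ∀ i, (f i).natDegree ≤ d)
    (h : ℝ) (hh : ∀ i, polyHeight (f i) ≤ h)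
    (g : Polynomial ℤ) (hgdvd : ∀ i, g ∣ f i)
    (hggreatest : ∀ c : Polynomial ℤ, (∀ i, c ∣ f i) → c ∣ g) :
    ∀ i, f i ≠ 0 → ∀ q : Polynomial ℤ, g * q = f i →
      polyHeight q ≤ (1 / 2) * Real.log ((d : ℝ) + 1) + (d : ℝ) * Real.log 2 + h := by
  intro i hfi q hq
  have hqne : q ≠ 0 := by rintro rfl; rw [mul_zero] at hq; exact hfi hq.symm
  have hgne : g ≠ 0 := by rintro rfl; rw [zero_mul] at hq; exact hfi hq.symm
  have hdq : q.natDegree ≤ d := by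
    have h1 : (f i).natDegree = g.natDegree + q.natDegree := by
      rw [← hq]; exact Polynomial.natDegree_mul hgne hqne
    have := hd i; omega
  -- the sup for q
  set Sq : ℕ := (Finset.range (q.natDegree + 1)).sup fun k => (q.coeff k).natAbs with hSq
  set A : ℕ := (Finset.range ((f i).natDegree + 1)).sup fun j => ((f i).coeff j).natAbs with hA
  have hA1 : 1 ≤ A := by
    have hmem : (f i).natDegree ∈ Finset.range ((f i).natDegree + 1) :=
      Finset.mem_range.2 (Nat.lt_succ_self _)
    have := Finset.le_sup (f := fun j => ((f i).coeff j).natAbs) hmem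
    have hlc : ((f i).coeff (f i).natDegree) ≠ 0 := by
      rw [← Polynomial.leadingCoeff]; exact Polynomial.leadingCoeff_ne_zero.2 hfi
    have h1 : 1 ≤ ((f i).coeff (f i).natDegree).natAbs := Int.natAbs_pos.2 hlc
    rw [hA]; exact le_trans h1 this
  have hSq1 : 1 ≤ Sq := by
    have hmem : q.natDegree ∈ Finset.range (q.natDegree + 1) :=
      Finset.mem_range.2 (Nat.lt_succ_self _)
    have := Finset.le_sup (f := fun k => (q.coeff k).natAbs) hmem
    have hlc : (q.coeff q.natDegree) ≠ 0 := by
      rw [← Polynomial.leadingCoeff]; exact Polynomial.leadingCoeff_ne_zero.2 hqne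
    have h1 : 1 ≤ (q.coeff q.natDegree).natAbs := Int.natAbs_pos.2 hlc
    rw [hSq]; exact le_trans h1 this
  -- bound Sq
  obtain ⟨k₀, hk₀mem, hk₀⟩ := Finset.exists_mem_eq_sup (Finset.range (q.natDegree + 1))
    (Finset.nonempty_range_iff.2 (Nat.succ_ne_zero _)) (fun k => (q.coeff k).natAbs)
  have hbound : (Sq : ℝ) ≤ 2 ^ d * (Real.sqrt ((d:ℝ)+1) * (A : ℝ)) := by
    rw [hSq, hk₀]
    exact coeff_div_bound hfi hq k₀ d hdq (hd i)
  -- take logs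
  have hAlog : Real.log (A : ℝ) ≤ h := by
    have := hh i
    rwa [polyHeight, ← hA] at this
  have hpos : (0:ℝ) < 2 ^ d * (Real.sqrt ((d:ℝ)+1) * (A : ℝ)) := by
    have h2 : (0:ℝ) < Real.sqrt ((d:ℝ)+1) := Real.sqrt_pos.2 (by positivity)
    have h3 : (0:ℝ) < (A:ℝ) := by exact_mod_cast hA1
    positivity
  have hlog : Real.log (Sq : ℝ) ≤ Real.log (2 ^ d * (Real.sqrt ((d:ℝ)+1) * (A : ℝ))) :=
    Real.log_le_log (by exact_mod_cast hSq1) hbound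
  rw [polyHeight, ← hSq]
  refine le_trans hlog ?_
  have hA0 : (0:ℝ) < (A:ℝ) := by exact_mod_cast hA1
  have hs0 : (0:ℝ) < Real.sqrt ((d:ℝ)+1) := Real.sqrt_pos.2 (by positivity)
  rw [Real.log_mul (by positivity) (ne_of_gt (mul_pos hs0 hA0)),
    Real.log_mul (ne_of_gt hs0) (ne_of_gt hA0),
    Real.log_pow, Real.log_sqrt (by positivity)]
  linarith
end

section
/- Let B = {b₁,…,b_k} be a reduced Gröbner basis of a nonzero ideal of ℤ[x], where each b_i has positive leading coefficient c_i and degree d_i, indexed so that the leading terms are increasing. Then: (1) 0 ≤ d₁ < d₂ < ⋯ < d_k; (2) c_k ∣ c_{k−1} ∣ ⋯ ∣ c₁ and c_i ≠ c_{i+1} for 1 ≤ i ≤ k−1; (3) the integer c_i/c_k divides b_i (i.e., divides every coefficient of b_i) for 1 ≤ i < k, and the primitive part of b₁ divides b_i in ℤ[x] for every 1 < i ≤ k. -/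
open Polynomial

/-- A finite set `G` of nonzero polynomials in ℤ[x] with positive leading coefficients
is a Gröbner basis of an ideal `I ⊆ ℤ[x]` if `G ⊆ I`, `G` generates `I`, and for
every nonzero `f ∈ I` there is a `g ∈ G` with `deg g ≤ deg f` and `lc g ∣ lc f`. -/
def IsGroebnerBasis (G : Finset (Polynomial ℤ)) (I : Ideal (Polynomial ℤ)) : Prop :=
  (∀ g ∈ G, g ≠ 0 ∧ 0 < g.leadingCoeff) ∧
  (↑G : Set (Polynomial ℤ)) ⊆ (I : Set (Polynomial ℤ)) ∧
  Ideal.span (↑G : Set (Polynomial ℤ)) = I ∧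
  ∀ f ∈ I, f ≠ 0 → ∃ g ∈ G, g.natDegree ≤ Polynomial.natDegree f ∧
    g.leadingCoeff ∣ f.leadingCoeff

/-- A Gröbner basis `G` is reduced if moreover for all `g ≠ g'` in `G` and every
`k ≥ deg g'`, the coefficient of `x^k` in `g` lies in `[0, lc g')`. -/
def IsReducedGroebnerBasis (G : Finset (Polynomial ℤ)) (I : Ideal (Polynomial ℤ)) : Prop :=
  IsGroebnerBasis G I ∧
  ∀ g ∈ G, ∀ g' ∈ G, g ≠ g' → ∀ k : ℕ, g'.natDegree ≤ k →
    0 ≤ g.coeff k ∧ g.coeff k < g'.leadingCoeff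

/-- Strong reduction: every element of `I` is a combination `∑ hⱼ bⱼ` with
`deg (hⱼ bⱼ) ≤ deg f`. -/
lemma groebner_reduction {k : ℕ} (b : Fin k → Polynomial ℤ) (I : Ideal (Polynomial ℤ))
    (hmem : ∀ i, b i ∈ I)
    (hGB : ∀ f ∈ I, f ≠ 0 → ∃ i : Fin k, (b i).natDegree ≤ f.natDegree ∧
      (b i).leadingCoeff ∣ f.leadingCoeff) :
    ∀ n : ℕ, ∀ f ∈ I, f.natDegree < n →
      ∃ h : Fin k → Polynomial ℤ, f = ∑ j, h j * b j ∧
        ∀ j, h j = 0 ∨ (f ≠ 0 ∧ (h j * b j).natDegree ≤ f.natDegree) := by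
  intro n
  induction n with
  | zero => intro f _ hd; omega
  | succ n ih =>
    intro f hf hd
    by_cases h0 : f = 0
    · exact ⟨0, by simp [h0], fun j => Or.inl rfl⟩
    obtain ⟨m, hm, hdvd⟩ := hGB f hf h0
    obtain ⟨q, hq⟩ := hdvd
    set s : ℕ := f.natDegree - (b m).natDegree with hsdef
    set f' : Polynomial ℤ := f - C q * (b m * X ^ s) with hf'def
    have hf'I : f' ∈ I := I.sub_mem hf (I.mul_mem_left _ (I.mul_mem_right _ (hmem m)))
    have hcoeff : ∀ t, f.natDegree ≤ t → f'.coeff t = 0 := by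
      intro t ht
      rw [hf'def, coeff_sub, coeff_C_mul, coeff_mul_X_pow', if_pos (show s ≤ t by omega)]
      rcases eq_or_lt_of_le ht with he | hlt
      · subst he
        have hsub : f.natDegree - s = (b m).natDegree := by omega
        rw [hsub, coeff_natDegree, coeff_natDegree]
        linear_combination hq
      · rw [coeff_eq_zero_of_natDegree_lt (show (b m).natDegree < t - s by omega),
          coeff_eq_zero_of_natDegree_lt hlt]
        ring
    have hb1 : (C q * X ^ s * b m).natDegree ≤ f.natDegree := by
      refine le_trans natDegree_mul_le ?_
      refine le_trans (Nat.add_le_add_right natDegree_mul_le _) ?_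
      simp only [natDegree_C, natDegree_X_pow, zero_add]
      omega
    by_cases h0' : f' = 0
    · refine ⟨fun j => if j = m then C q * X ^ s else 0, ?_, ?_⟩
      · have hfs : f = C q * X ^ s * b m := by
          have h2 : f = C q * (b m * X ^ s) := sub_eq_zero.mp h0'
          rw [h2]; ring
        rw [hfs]
        simp [ite_mul, Finset.sum_ite_eq', Finset.mem_univ]
      · intro j
        by_cases hj : j = m
        · subst hj
          refine Or.inr ⟨h0, ?_⟩
          simpa using hb1
        · exact Or.inl (if_neg hj)
    · have hlt : f'.natDegree < f.natDegree := by
        by_contra hge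
        push_neg at hge
        have := hcoeff f'.natDegree hge
        rw [coeff_natDegree] at this
        exact leadingCoeff_ne_zero.mpr h0' this
      obtain ⟨h', hsum', hprop'⟩ := ih f' hf'I (by omega)
      refine ⟨fun j => h' j + if j = m then C q * X ^ s else 0, ?_, ?_⟩
      · simp only [add_mul, ite_mul, zero_mul, Finset.sum_add_distrib,
          Finset.sum_ite_eq', Finset.mem_univ, if_pos]
        rw [← hsum', hf'def]
        ring
      · intro j
        refine Or.inr ⟨h0, ?_⟩
        rw [add_mul]
        refine le_trans (natDegree_add_le _ _) (max_le ?_ ?_)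
        · rcases hprop' j with hz | ⟨_, hle⟩
          · simp [hz]
          · exact hle.trans (by omega)
        · by_cases hj : j = m
          · subst hj; simpa using hb1
          · simp [if_neg hj]
/-- Let B = {b₁,…,b_k} be a reduced Gröbner basis of a nonzero ideal of ℤ[x],
each b_i with positive leading coefficient c_i and degree d_i, indexed with increasing
leading terms. Then (1) d₁ < ⋯ < d_k; (2) c_k ∣ ⋯ ∣ c₁ and c_i ≠ c_{i+1};
(3) c_i/c_k divides every coefficient of b_i for i < k, and the primitive part of b₁
divides b_i in ℤ[x] for i > 1. -/
theorem stmt6 {k : ℕ} (hk : 0 < k) (b : Fin k → Polynomial ℤ)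
    (I : Ideal (Polynomial ℤ)) (hI : I ≠ ⊥)
    (hinc : ∀ i j : Fin k, i < j →
      (b i).natDegree < (b j).natDegree ∨
      ((b i).natDegree = (b j).natDegree ∧ (b i).leadingCoeff < (b j).leadingCoeff))
    (hB : IsReducedGroebnerBasis (Finset.image b Finset.univ) I) :
    (StrictMono fun i : Fin k => (b i).natDegree) ∧
    (∀ i j : Fin k, i ≤ j → (b j).leadingCoeff ∣ (b i).leadingCoeff) ∧
    (∀ i j : Fin k, (j : ℕ) = (i : ℕ) + 1 → (b i).leadingCoeff ≠ (b j).leadingCoeff) ∧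
    (∀ i : Fin k, (i : ℕ) < k - 1 →
      Polynomial.C ((b i).leadingCoeff / (b ⟨k - 1, by omega⟩).leadingCoeff) ∣ b i) ∧
    (∀ i : Fin k, 0 < (i : ℕ) → (b ⟨0, hk⟩).primPart ∣ b i) := by
  obtain ⟨⟨hpos', hsub, hspan, hGB'⟩, hred'⟩ := hB
  have hmemB : ∀ i : Fin k, b i ∈ Finset.image b Finset.univ :=
    fun i => Finset.mem_image_of_mem b (Finset.mem_univ i)
  have hpos : ∀ i : Fin k, b i ≠ 0 ∧ 0 < (b i).leadingCoeff := fun i => hpos' _ (hmemB i)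
  have hmem : ∀ i : Fin k, b i ∈ I := fun i => hsub (hmemB i)
  have hGB : ∀ f ∈ I, f ≠ 0 → ∃ i : Fin k, (b i).natDegree ≤ f.natDegree ∧
      (b i).leadingCoeff ∣ f.leadingCoeff := by
    intro f hf h0
    obtain ⟨g, hg, h1, h2⟩ := hGB' f hf h0
    obtain ⟨i, _, rfl⟩ := Finset.mem_image.mp hg
    exact ⟨i, h1, h2⟩
  have hred : ∀ i j : Fin k, b i ≠ b j → ∀ t : ℕ, (b j).natDegree ≤ t →
      0 ≤ (b i).coeff t ∧ (b i).coeff t < (b j).leadingCoeff :=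
    fun i j hne t ht => hred' _ (hmemB i) _ (hmemB j) hne t ht
  -- Part 1 : strict monotonicity of degrees
  have hmono : StrictMono fun i : Fin k => (b i).natDegree := by
    intro i j hij
    rcases hinc i j hij with h | ⟨hdeq, hlt⟩
    · exact h
    · exfalso
      have hne : b j ≠ b i := by
        intro he
        rw [he] at hlt
        exact lt_irrefl _ hlt
      have h2 := (hred j i hne (b i).natDegree le_rfl).2
      rw [hdeq, coeff_natDegree] at h2
      omega
  -- Lemma A : for i < j, lc (b i) does not divide lc (b j)
  have hA : ∀ i j : Fin k, i < j → ¬ ((b i).leadingCoeff ∣ (b j).leadingCoeff) := by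
    intro i j hij hdvd
    have hdlt : (b i).natDegree < (b j).natDegree := hmono hij
    have hne : b j ≠ b i := by
      intro he
      rw [he] at hdlt
      omega
    have h2 := (hred j i hne (b j).natDegree hdlt.le).2
    rw [coeff_natDegree] at h2
    have h3 := Int.le_of_dvd (hpos j).2 hdvd
    omega
  -- Part 2 : divisibility chain
  have hchain : ∀ i j : Fin k, i ≤ j → (b j).leadingCoeff ∣ (b i).leadingCoeff := by
    intro i j hij
    rcases hij.lt_or_eq with hlt | rfl
    swap
    · exact dvd_rfl
    have hdle : (b i).natDegree ≤ (b j).natDegree := (hmono hlt).le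
    set N : ℕ := (b j).natDegree - (b i).natDegree with hN
    set u : ℤ := Int.gcdA (b i).leadingCoeff (b j).leadingCoeff with hu
    set v : ℤ := Int.gcdB (b i).leadingCoeff (b j).leadingCoeff with hv
    set G : ℤ := (Int.gcd (b i).leadingCoeff (b j).leadingCoeff : ℤ) with hG
    have hBez : G = (b i).leadingCoeff * u + (b j).leadingCoeff * v :=
      Int.gcd_eq_gcd_ab _ _
    set f : Polynomial ℤ := C u * (b i * X ^ N) + C v * b j with hfdef
    have hfI : f ∈ I :=
      I.add_mem (I.mul_mem_left _ (I.mul_mem_right _ (hmem i))) (I.mul_mem_left _ (hmem j))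
    have hctop : f.coeff (b j).natDegree = G := by
      rw [hfdef, coeff_add, coeff_C_mul, coeff_C_mul, coeff_mul_X_pow',
        if_pos (show N ≤ (b j).natDegree by omega)]
      have hsub : (b j).natDegree - N = (b i).natDegree := by omega
      rw [hsub, coeff_natDegree, coeff_natDegree]
      linear_combination -hBez
    have hhi : ∀ t, (b j).natDegree < t → f.coeff t = 0 := by
      intro t ht
      rw [hfdef, coeff_add, coeff_C_mul, coeff_C_mul, coeff_mul_X_pow',
        if_pos (show N ≤ t by omega)]
      rw [coeff_eq_zero_of_natDegree_lt (show (b i).natDegree < t - N by omega),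
        coeff_eq_zero_of_natDegree_lt ht]
      ring
    have hGpos : 0 < G := by
      rw [hG]
      have : Int.gcd (b i).leadingCoeff (b j).leadingCoeff ≠ 0 := by
        intro h
        exact (hpos i).2.ne' (Int.gcd_eq_zero_iff.mp h).1
      positivity
    have hfne : f ≠ 0 := by
      intro h
      rw [h, coeff_zero] at hctop
      omega
    have hdf : f.natDegree = (b j).natDegree :=
      le_antisymm (natDegree_le_iff_coeff_eq_zero.mpr hhi)
        (le_natDegree_of_ne_zero (by rw [hctop]; exact hGpos.ne'))
    have hlcf : f.leadingCoeff = G := by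
      rw [leadingCoeff, hdf, hctop]
    obtain ⟨m, hm1, hm2⟩ := hGB f hfI hfne
    rw [hdf] at hm1
    have hmj : m ≤ j := by
      by_contra hc
      push_neg at hc
      exact absurd hm1 (not_le.mpr (hmono hc))
    rcases hmj.lt_or_eq with hmlt | rfl
    · exact absurd ((hm2.trans (by rw [hlcf, hG]; exact Int.gcd_dvd_right _ _)))
        (hA m j hmlt)
    · exact (hm2.trans (by rw [hlcf, hG]; exact Int.gcd_dvd_left _ _))
  -- structure: every b i is (content) * primPart(b 0) * monic
  have ht0pos : 0 < (b ⟨0, hk⟩).content := by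
    have hnn : 0 ≤ (b ⟨0, hk⟩).content :=
      Int.nonneg_of_normalize_eq_self normalize_content
    have hne : (b ⟨0, hk⟩).content ≠ 0 := by
      rw [Ne, content_eq_zero_iff]
      exact (hpos ⟨0, hk⟩).1
    omega
  have hc0pos : 0 < (b ⟨0, hk⟩).leadingCoeff := (hpos ⟨0, hk⟩).2
  have hgne : (b ⟨0, hk⟩).primPart ≠ 0 := (b ⟨0, hk⟩).primPart_ne_zero
  -- auxiliary: degree relation from the structure equation
  have hdegw : ∀ (j : Fin k) (w : Polynomial ℤ), w ≠ 0 →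
      C (b ⟨0, hk⟩).leadingCoeff * b j =
        C ((b ⟨0, hk⟩).content * (b j).leadingCoeff) * (b ⟨0, hk⟩).primPart * w →
      (b j).natDegree = (b ⟨0, hk⟩).primPart.natDegree + w.natDegree := by
    intro j w hw0 hw
    have hcne : (b ⟨0, hk⟩).content * (b j).leadingCoeff ≠ 0 :=
      mul_ne_zero ht0pos.ne' (hpos j).2.ne'
    have h1 := congrArg natDegree hw
    rw [natDegree_mul (C_ne_zero.mpr hc0pos.ne') (hpos j).1,
      natDegree_mul (mul_ne_zero (C_ne_zero.mpr hcne) hgne) hw0,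
      natDegree_mul (C_ne_zero.mpr hcne) hgne] at h1
    simp only [natDegree_C] at h1
    omega
  have key : ∀ n : ℕ, ∀ i : Fin k, (i : ℕ) ≤ n →
      ∃ w : Polynomial ℤ, w.Monic ∧
        C (b ⟨0, hk⟩).leadingCoeff * b i =
          C ((b ⟨0, hk⟩).content * (b i).leadingCoeff) * (b ⟨0, hk⟩).primPart * w := by
    intro n
    induction n with
    | zero =>
      intro i hi
      have hi0 : i = ⟨0, hk⟩ := by
        apply Fin.ext
        show (i : ℕ) = 0
        omega
      subst hi0
      refine ⟨1, monic_one, ?_⟩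
      rw [mul_one]
      have h2 : C ((b ⟨0, hk⟩).content * (b ⟨0, hk⟩).leadingCoeff) * (b ⟨0, hk⟩).primPart =
          C (b ⟨0, hk⟩).leadingCoeff * (C (b ⟨0, hk⟩).content * (b ⟨0, hk⟩).primPart) := by
        rw [C_mul]; ring
      rw [h2, ← (b ⟨0, hk⟩).eq_C_content_mul_primPart]
    | succ n ih =>
      intro i hi
      by_cases hle : (i : ℕ) ≤ n
      · exact ih i hle
      have hival : (i : ℕ) = n + 1 := by omega
      have hnk : n < k := by omega
      set ip : Fin k := ⟨n, hnk⟩ with hip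
      have hplt : ip < i := by
        rw [Fin.lt_def]
        show n < (i : ℕ)
        omega
      obtain ⟨wp, hwpM, hwp⟩ := ih ip (le_refl n)
      have hdlt : (b ip).natDegree < (b i).natDegree := hmono hplt
      set N : ℕ := (b i).natDegree - (b ip).natDegree with hN
      obtain ⟨m', hm'⟩ := hchain ip i hplt.le
      set f : Polynomial ℤ := b ip * X ^ N - C m' * b i with hfdef
      have hfI : f ∈ I :=
        I.sub_mem (I.mul_mem_right _ (hmem ip)) (I.mul_mem_left _ (hmem i))
      have hcoeff : ∀ t, (b i).natDegree ≤ t → f.coeff t = 0 := by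
        intro t ht
        rw [hfdef, coeff_sub, coeff_mul_X_pow', if_pos (show N ≤ t by omega), coeff_C_mul]
        rcases eq_or_lt_of_le ht with he | hlt2
        · subst he
          have hsub : (b i).natDegree - N = (b ip).natDegree := by omega
          rw [hsub, coeff_natDegree, coeff_natDegree]
          linear_combination hm'
        · rw [coeff_eq_zero_of_natDegree_lt (show (b ip).natDegree < t - N by omega),
            coeff_eq_zero_of_natDegree_lt hlt2]
          ring
      have hfdeg : f ≠ 0 → f.natDegree < (b i).natDegree := by
        intro h0
        by_contra hge
        push_neg at hge
        have := hcoeff f.natDegree hge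
        rw [coeff_natDegree] at this
        exact leadingCoeff_ne_zero.mpr h0 this
      obtain ⟨h, hsum, hprop⟩ :=
        groebner_reduction b I hmem hGB (f.natDegree + 1) f hfI (Nat.lt_succ_self _)
      -- factor each summand
      have hv : ∀ j : Fin k, ∃ v : Polynomial ℤ,
          C (b ⟨0, hk⟩).leadingCoeff * (h j * b j) =
            C ((b ⟨0, hk⟩).content * (b ip).leadingCoeff) * (b ⟨0, hk⟩).primPart * v ∧
          v.degree < (((b i).natDegree - (b ⟨0, hk⟩).primPart.natDegree : ℕ) : WithBot ℕ) := by
        intro j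
        by_cases hj0 : h j = 0
        · refine ⟨0, by rw [hj0]; ring, ?_⟩
          rw [degree_zero]
          exact WithBot.bot_lt_coe _
        · have hfne := (hprop j).resolve_left hj0
          have hjb : (h j * b j).natDegree < (b i).natDegree :=
            lt_of_le_of_lt hfne.2 (hfdeg hfne.1)
          have hdegmul : (h j * b j).natDegree = (h j).natDegree + (b j).natDegree :=
            natDegree_mul hj0 (hpos j).1
          have hjle : (j : ℕ) ≤ n := by
            by_contra hc
            push_neg at hc
            have hij : i ≤ j := by
              rw [Fin.le_def]
              omega
            have := hmono.monotone hij
            omega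
          obtain ⟨wj, hwjM, hwj⟩ := ih j hjle
          obtain ⟨r, hr⟩ := hchain j ip (by rw [Fin.le_def]; show (j : ℕ) ≤ n; omega)
          have hr0 : r ≠ 0 := by
            rintro rfl
            rw [mul_zero] at hr
            exact (hpos j).2.ne' hr
          have hwj0 : wj ≠ 0 := hwjM.ne_zero
          have hdwj : (b j).natDegree = (b ⟨0, hk⟩).primPart.natDegree + wj.natDegree :=
            hdegw j wj hwj0 hwj
          refine ⟨C r * (h j * wj), ?_, ?_⟩
          · have e1 : C ((b ⟨0, hk⟩).content * (b j).leadingCoeff) =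
                C ((b ⟨0, hk⟩).content * (b ip).leadingCoeff) * C r := by
              rw [← C_mul, hr]
              congr 1
              ring
            calc C (b ⟨0, hk⟩).leadingCoeff * (h j * b j)
                = h j * (C (b ⟨0, hk⟩).leadingCoeff * b j) := by ring
              _ = h j * (C ((b ⟨0, hk⟩).content * (b j).leadingCoeff) *
                    (b ⟨0, hk⟩).primPart * wj) := by rw [hwj]
              _ = h j * (C ((b ⟨0, hk⟩).content * (b ip).leadingCoeff) * C r *
                    (b ⟨0, hk⟩).primPart * wj) := by rw [e1]
              _ = C ((b ⟨0, hk⟩).content * (b ip).leadingCoeff) * (b ⟨0, hk⟩).primPart *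
                    (C r * (h j * wj)) := by ring
          · have hnv : (C r * (h j * wj)).natDegree <
                (b i).natDegree - (b ⟨0, hk⟩).primPart.natDegree := by
              rw [natDegree_mul (C_ne_zero.mpr hr0) (mul_ne_zero hj0 hwj0),
                natDegree_mul hj0 hwj0, natDegree_C]
              omega
            exact lt_of_le_of_lt degree_le_natDegree (by exact_mod_cast WithBot.coe_lt_coe.mpr hnv)
      choose v hv1 hv2 using hv
      have hsumeq : C (b ⟨0, hk⟩).leadingCoeff * f =
          C ((b ⟨0, hk⟩).content * (b ip).leadingCoeff) * (b ⟨0, hk⟩).primPart *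
            (∑ j, v j) := by
        calc C (b ⟨0, hk⟩).leadingCoeff * f
            = ∑ j, C (b ⟨0, hk⟩).leadingCoeff * (h j * b j) := by
              rw [hsum, Finset.mul_sum]
          _ = ∑ j, C ((b ⟨0, hk⟩).content * (b ip).leadingCoeff) * (b ⟨0, hk⟩).primPart *
                (v j) := Finset.sum_congr rfl fun j _ => hv1 j
          _ = _ := by rw [← Finset.mul_sum]
      have hVdeg : (∑ j, v j).degree <
          (((b i).natDegree - (b ⟨0, hk⟩).primPart.natDegree : ℕ) : WithBot ℕ) :=
        lt_of_le_of_lt (degree_sum_le _ _)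
          ((Finset.sup_lt_iff (WithBot.bot_lt_coe _)).mpr fun j _ => hv2 j)
      have hdwp : (b ip).natDegree = (b ⟨0, hk⟩).primPart.natDegree + wp.natDegree :=
        hdegw ip wp hwpM.ne_zero hwp
      have hm'0 : m' ≠ 0 := by
        rintro rfl
        rw [mul_zero] at hm'
        exact (hpos ip).2.ne' hm'
      have hW : C m' * (C (b ⟨0, hk⟩).leadingCoeff * b i) =
          C m' * (C ((b ⟨0, hk⟩).content * (b i).leadingCoeff) * (b ⟨0, hk⟩).primPart *
            (wp * X ^ N - ∑ j, v j)) := by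
        have hstep : C (b ⟨0, hk⟩).leadingCoeff * (b ip * X ^ N) =
            C ((b ⟨0, hk⟩).content * (b ip).leadingCoeff) * (b ⟨0, hk⟩).primPart *
              (wp * X ^ N) := by
          calc C (b ⟨0, hk⟩).leadingCoeff * (b ip * X ^ N)
              = (C (b ⟨0, hk⟩).leadingCoeff * b ip) * X ^ N := by ring
            _ = _ := by rw [hwp]; ring
        have hcip : C ((b ⟨0, hk⟩).content * (b ip).leadingCoeff) =
            C m' * C ((b ⟨0, hk⟩).content * (b i).leadingCoeff) := by
          rw [← C_mul, hm']
          congr 1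
          ring
        calc C m' * (C (b ⟨0, hk⟩).leadingCoeff * b i)
            = C (b ⟨0, hk⟩).leadingCoeff * (b ip * X ^ N) -
              C (b ⟨0, hk⟩).leadingCoeff * f := by rw [hfdef]; ring
          _ = C ((b ⟨0, hk⟩).content * (b ip).leadingCoeff) * (b ⟨0, hk⟩).primPart *
                (wp * X ^ N) -
              C ((b ⟨0, hk⟩).content * (b ip).leadingCoeff) * (b ⟨0, hk⟩).primPart *
                (∑ j, v j) := by rw [hstep, hsumeq]
          _ = C ((b ⟨0, hk⟩).content * (b ip).leadingCoeff) * (b ⟨0, hk⟩).primPart *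
                (wp * X ^ N - ∑ j, v j) := by ring
          _ = _ := by rw [hcip]; ring
      have hfinal : C (b ⟨0, hk⟩).leadingCoeff * b i =
          C ((b ⟨0, hk⟩).content * (b i).leadingCoeff) * (b ⟨0, hk⟩).primPart *
            (wp * X ^ N - ∑ j, v j) :=
        mul_left_cancel₀ (C_ne_zero.mpr hm'0) hW
      have h1M : (wp * X ^ N).Monic := hwpM.mul (monic_X_pow N)
      have h2deg : (wp * X ^ N).degree =
          (((b i).natDegree - (b ⟨0, hk⟩).primPart.natDegree : ℕ) : WithBot ℕ) := by
        rw [degree_eq_natDegree h1M.ne_zero,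
          natDegree_mul hwpM.ne_zero (pow_ne_zero N X_ne_zero), natDegree_X_pow]
        exact congrArg Nat.cast (by omega)
      have hMon : (wp * X ^ N - ∑ j, v j).Monic := by
        have := h1M.add_of_left (q := -(∑ j, v j)) (by rw [degree_neg, h2deg]; exact hVdeg)
        simpa [sub_eq_add_neg] using this
      exact ⟨_, hMon, hfinal⟩
  -- content relation and primPart divisibility
  have hcontent : ∀ i : Fin k,
      (b ⟨0, hk⟩).leadingCoeff * (b i).content =
        (b ⟨0, hk⟩).content * (b i).leadingCoeff ∧ (b ⟨0, hk⟩).primPart ∣ b i := by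
    intro i
    obtain ⟨w, hwM, hw⟩ := key (i : ℕ) i le_rfl
    have hgw : ((b ⟨0, hk⟩).primPart * w).content = 1 :=
      ((b ⟨0, hk⟩).isPrimitive_primPart.mul hwM.isPrimitive).content_eq_one
    have htine : (b i).content ≠ 0 := by
      rw [Ne, content_eq_zero_iff]; exact (hpos i).1
    have heq : (b ⟨0, hk⟩).leadingCoeff * (b i).content =
        (b ⟨0, hk⟩).content * (b i).leadingCoeff := by
      have h1 : (C (b ⟨0, hk⟩).leadingCoeff * b i).content =
          (b ⟨0, hk⟩).leadingCoeff * (b i).content := by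
        rw [content_C_mul, Int.normalize_of_nonneg hc0pos.le]
      have h2 : (C ((b ⟨0, hk⟩).content * (b i).leadingCoeff) *
          ((b ⟨0, hk⟩).primPart * w)).content =
          (b ⟨0, hk⟩).content * (b i).leadingCoeff := by
        rw [content_C_mul, hgw, mul_one, Int.normalize_of_nonneg
          (mul_nonneg ht0pos.le (hpos i).2.le)]
      rw [← h1, hw, mul_assoc, h2]
    refine ⟨heq, ?_⟩
    have hbi : C ((b ⟨0, hk⟩).leadingCoeff * (b i).content) * (b i).primPart =
        C ((b ⟨0, hk⟩).leadingCoeff * (b i).content) * ((b ⟨0, hk⟩).primPart * w) := by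
      calc C ((b ⟨0, hk⟩).leadingCoeff * (b i).content) * (b i).primPart
          = C (b ⟨0, hk⟩).leadingCoeff * (C (b i).content * (b i).primPart) := by
            rw [C_mul]; ring
        _ = C (b ⟨0, hk⟩).leadingCoeff * b i := by rw [← (b i).eq_C_content_mul_primPart]
        _ = C ((b ⟨0, hk⟩).content * (b i).leadingCoeff) * ((b ⟨0, hk⟩).primPart * w) := by
            rw [hw, mul_assoc]
        _ = _ := by rw [heq]
    have hpp : (b i).primPart = (b ⟨0, hk⟩).primPart * w :=
      mul_left_cancel₀ (C_ne_zero.mpr (mul_ne_zero hc0pos.ne' htine)) hbi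
    exact (Dvd.intro _ hpp.symm).trans (b i).primPart_dvd
  refine ⟨hmono, hchain, ?_, ?_, ?_⟩
  · -- consecutive leading coefficients differ
    intro i j hij heq
    have hlt : i < j := by
      rw [Fin.lt_def]; omega
    exact hA i j hlt (heq ▸ dvd_rfl)
  · -- C (c i / c last) ∣ b i
    intro i hi
    have hkk : k - 1 < k := by omega
    show C ((b i).leadingCoeff / (b ⟨k - 1, hkk⟩).leadingCoeff) ∣ b i
    set l : Fin k := ⟨k - 1, hkk⟩ with hl
    have hil : i ≤ l := by
      rw [Fin.le_def]
      show (i : ℕ) ≤ k - 1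
      omega
    have hdl : (b l).leadingCoeff ∣ (b i).leadingCoeff := hchain i _ hil
    have heqi := (hcontent i).1
    have heql := (hcontent l).1
    have hm : (b i).leadingCoeff / (b l).leadingCoeff *
        (b l).leadingCoeff = (b i).leadingCoeff := Int.ediv_mul_cancel hdl
    have hti : (b i).content = (b l).content *
        ((b i).leadingCoeff / (b l).leadingCoeff) := by
      apply mul_left_cancel₀ hc0pos.ne'
      linear_combination heqi -
        ((b i).leadingCoeff / (b l).leadingCoeff) * heql -
        (b ⟨0, hk⟩).content * hm
    have hdvdZ : (b i).leadingCoeff / (b l).leadingCoeff ∣ (b i).content :=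
      ⟨(b l).content, hti.trans (mul_comm _ _)⟩
    exact dvd_trans (map_dvd C hdvdZ) ((b i).C_content_dvd)
  · intro i _
    exact (hcontent i).2
end
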